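/- arXiv:2104.10799 — 4 statements merged into one kernel-verified Lean document; each statement's English description precedes it below -/
import Mathlib

section
/- Let (X_1, X_2) be a Latin hypercube sample of N = 2 points in [0,1)^2, and for ε ∈ (0, 1/2) set D(ε) = [0, 1/2 + ε)^2 \ [0, 1/2)^2. Then P(X_1 ∈ D(ε), X_2 ∈ D(ε)) = 2ε^2, P(X_i ∈ D(ε)) = ε(1 + ε) for i = 1, 2, and consequently lim_{ε → 0+} P(X_1 ∈ D(ε), X_2 ∈ D(ε)) / (P(X_1 ∈ D(ε)) P(X_2 ∈ D(ε))) = 2. -/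
open MeasureTheory ProbabilityTheory Filter
open scoped ENNReal Classical

namespace LHSPaper

/-- The anchored box `[0,a) = ∏_i [0, a_i)` in `[0,1)^d`. -/
def anchoredBox {d : ℕ} (a : Fin d → ℝ) : Set (Fin d → ℝ) := {x | ∀ i, x i ∈ Set.Ico 0 (a i)}

/-- `C^d_0`, the collection of anchored boxes `[0,a)` with `a ∈ [0,1]^d`. -/
def anchoredBoxes (d : ℕ) : Set (Set (Fin d → ℝ)) :=
  {S | ∃ a : Fin d → ℝ, (∀ i, a i ∈ Set.Icc (0 : ℝ) 1) ∧ S = anchoredBox a}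

/-- `D^d_0`, the collection of differences `B \ A` of anchored boxes. -/
def boxDiffs (d : ℕ) : Set (Set (Fin d → ℝ)) :=
  {S | ∃ A ∈ anchoredBoxes d, ∃ B ∈ anchoredBoxes d, S = B \ A}

/-- The half-open unit cube `[0,1)^d`. -/
def unitCube (d : ℕ) : Set (Fin d → ℝ) := {x | ∀ i, x i ∈ Set.Ico (0 : ℝ) 1}

/-- `γ`-negative dependence of the indicators of the events `A 1, …, A N`. -/
def GammaNegDep {Ω : Type*} [MeasurableSpace Ω] (μ : Measure Ω) {N : ℕ}
    (γ : ℝ≥0∞) (A : Fin N → Set Ω) : Prop :=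
  ∀ J : Finset (Fin N), J.Nonempty →
    μ (⋂ j ∈ J, A j) ≤ γ * ∏ j ∈ J, μ (A j) ∧
    μ (⋂ j ∈ J, (A j)ᶜ) ≤ γ * ∏ j ∈ J, μ (A j)ᶜ

/-- The `𝒮`-correlation number of a random point tuple `X`. -/
noncomputable def corrNum {Ω : Type*} [MeasurableSpace Ω] (μ : Measure Ω) {N d : ℕ}
    (𝒮 : Set (Set (Fin d → ℝ))) (X : Fin N → Ω → Fin d → ℝ) : ℝ≥0∞ :=
  ⨆ (S : Set (Fin d → ℝ)) (_ : S ∈ 𝒮) (J : Finset (Fin N)) (_ : J.Nonempty),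
    max (μ (⋂ j ∈ J, {ω | X j ω ∈ S}) / ∏ j ∈ J, μ {ω | X j ω ∈ S})
        (μ (⋂ j ∈ J, {ω | X j ω ∉ S}) / ∏ j ∈ J, μ {ω | X j ω ∉ S})

instance (N : ℕ) : MeasurableSpace (Equiv.Perm (Fin N)) := ⊤

instance (N : ℕ) : Nonempty (Equiv.Perm (Fin N)) := ⟨Equiv.refl _⟩

/-- Value types of the sources of randomness of a Latin hypercube sample:
`d` random permutations and `N·d` random reals. -/
def lhsβ (d N : ℕ) : (Fin d ⊕ (Fin N × Fin d)) → Type :=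
  fun i => Sum.elim (fun _ => Equiv.Perm (Fin N)) (fun _ => ℝ) i

noncomputable def lhsMS (d N : ℕ) : (i : Fin d ⊕ (Fin N × Fin d)) → MeasurableSpace (lhsβ d N i) :=
  fun i => match i with
  | .inl _ => ⊤
  | .inr _ => inferInstanceAs (MeasurableSpace ℝ)

def lhsFun {Ω : Type*} {d N : ℕ} (π : Fin d → Ω → Equiv.Perm (Fin N))
    (U : Fin N → Ω → Fin d → ℝ) : (i : Fin d ⊕ (Fin N × Fin d)) → Ω → lhsβ d N i :=
  fun i => match i with
  | .inl j => π j
  | .inr p => fun ω => U p.1 ω p.2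

/-- `X` is a Latin hypercube sample of `N` points in `[0,1)^d`, built from the
uniformly distributed random permutations `π_j` and the uniformly distributed
random variables `U_{n,j}`, all mutually independent. -/
def IsLHS {Ω : Type*} [MeasurableSpace Ω] (μ : Measure Ω) (d N : ℕ)
    (X : Fin N → Ω → Fin d → ℝ)
    (π : Fin d → Ω → Equiv.Perm (Fin N)) (U : Fin N → Ω → Fin d → ℝ) : Prop :=
  (∀ j, Measure.map (π j) μ = (PMF.uniformOfFintype (Equiv.Perm (Fin N))).toMeasure) ∧
  (∀ n j, Measure.map (fun ω => U n ω j) μ = volume.restrict (Set.Ico (0 : ℝ) 1)) ∧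
  iIndepFun (m := lhsMS d N) (lhsFun π U) μ ∧
  (∀ n j ω, X n ω j = (((π j ω) n : ℕ) + U n ω j) / N)

/-- An elementary interval in base `b` of order `k` in `[0,1)^d`. -/
def IsElemInterval (b d k : ℕ) (E : Set (Fin d → ℝ)) : Prop :=
  ∃ ℓ : Fin d → ℕ, ∃ a : Fin d → ℕ, (∀ i, a i < b ^ ℓ i) ∧ (∑ i, ℓ i = k) ∧
    E = {x | ∀ i, x i ∈ Set.Ico ((a i : ℝ) / b ^ ℓ i) (((a i : ℝ) + 1) / b ^ ℓ i)}

/-- A `(t,m,d)`-net in base `b`: `b^m` points in `[0,1)^d` such that every elementary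
interval of order `m - t` contains exactly `b^t` points (with multiplicity). -/
def IsNet (b d m t : ℕ) (P : Fin (b ^ m) → Fin d → ℝ) : Prop :=
  (∀ n, P n ∈ unitCube d) ∧
  ∀ E : Set (Fin d → ℝ), IsElemInterval b d (m - t) E →
    (Finset.univ.filter fun n => P n ∈ E).card = b ^ t

/-- A `b`-ary scrambling of depth `ℓ`: a self-map of `[0,1)` mapping, for each
`k ∈ {1,…,ℓ}`, elementary intervals of order `k` into elementary intervals of order `k`,
distinct ones into distinct ones. -/
def IsScrambling (b ℓ : ℕ) (σ : ℝ → ℝ) : Prop :=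
  (∀ x ∈ Set.Ico (0 : ℝ) 1, σ x ∈ Set.Ico (0 : ℝ) 1) ∧
  ∀ k, 1 ≤ k → k ≤ ℓ → ∃ f : ℕ → ℕ,
    (∀ a < b ^ k, f a < b ^ k) ∧
    (∀ a < b ^ k, ∀ a' < b ^ k, a ≠ a' → f a ≠ f a') ∧
    (∀ a < b ^ k, ∀ x ∈ Set.Ico ((a : ℝ) / b ^ k) (((a : ℝ) + 1) / b ^ k),
      σ x ∈ Set.Ico ((f a : ℝ) / b ^ k) (((f a : ℝ) + 1) / b ^ k))

/-- A basic cube of an abstract scrambled `(t,m,d)`-net in base `b`. -/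
def IsBasicCube (b d m t : ℕ) (C : Set (Fin d → ℝ)) : Prop :=
  ∃ k : Fin d → ℕ, (∀ j, k j < b ^ (m - t)) ∧
    C = {x | ∀ j, x j ∈ Set.Ico ((k j : ℝ) / b ^ (m - t)) (((k j : ℝ) + 1) / b ^ (m - t))}

/-- An abstract scrambled `(t,m,d)`-net in base `b`. -/
def IsAbstractScrambledNet {Ω : Type*} [MeasurableSpace Ω] (μ : Measure Ω)
    (b d m t : ℕ) (Y : Fin (b ^ m) → Ω → (Fin d → ℝ)) : Prop :=
  (∀ᵐ ω ∂μ, IsNet b d m t fun n => Y n ω) ∧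
  (∀ i C, IsBasicCube b d m t C → μ {ω | Y i ω ∈ C} = ((b : ℝ≥0∞) ^ (d * (m - t)))⁻¹) ∧
  (∀ M : Set (Fin d → ℝ), MeasurableSet M →
    ∀ J : Finset (Fin (b ^ m)), J.Nonempty →
    ∀ C : Fin (b ^ m) → Set (Fin d → ℝ), (∀ j ∈ J, IsBasicCube b d m t (C j)) →
      μ (⋂ j ∈ J, {ω | Y j ω ∈ C j}) ≠ 0 →
      (μ[|⋂ j ∈ J, {ω | Y j ω ∈ C j}]) (⋂ j ∈ J, {ω | Y j ω ∈ M}) =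
        ∏ j ∈ J, volume (M ∩ C j) / volume (C j))


section Aux

variable {Ω : Type*} [MeasurableSpace Ω] {μ : Measure Ω}
  {π : Fin 2 → Ω → Equiv.Perm (Fin 2)} {U : Fin 2 → Ω → Fin 2 → ℝ}


lemma fin2 : ∀ a : Fin 2, a = 0 ∨ a = 1 := by decide

lemma perm_fin_two : ∀ σ : Equiv.Perm (Fin 2), σ = 1 ∨ σ = Equiv.swap 0 1 := by decide

lemma coordA {ε u : ℝ} (hε : 0 < ε) (hε' : ε < 1/2) (a : Fin 2) (hu : u ∈ Set.Ico (0:ℝ) 1) :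
    (((a:ℕ):ℝ) + u) / 2 ∈ Set.Ico (0:ℝ) (1/2 + ε) ↔ (a = 1 → u ∈ Set.Ico (0:ℝ) (2*ε)) := by
  obtain ⟨hu0, hu1⟩ := hu
  rcases fin2 a with rfl | rfl <;> simp only [Set.mem_Ico] <;> norm_num
  · exact ⟨by linarith, by linarith⟩
  · constructor
    · rintro ⟨h1, h2⟩; exact ⟨by linarith, by linarith⟩
    · rintro ⟨h1, h2⟩; exact ⟨by linarith, by linarith⟩

lemma coordB {u : ℝ} (a : Fin 2) (hu : u ∈ Set.Ico (0:ℝ) 1) :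
    (((a:ℕ):ℝ) + u) / 2 ∈ Set.Ico (0:ℝ) (1/2) ↔ a = 0 := by
  obtain ⟨hu0, hu1⟩ := hu
  rcases fin2 a with rfl | rfl <;> simp only [Set.mem_Ico] <;> norm_num
  · exact ⟨by linarith, by linarith⟩
  · intro h1; linarith

def lhsSets {d N : ℕ} (A : Fin d → Set (Equiv.Perm (Fin N))) (B : Fin N → Fin d → Set ℝ) :
    ∀ i : Fin d ⊕ (Fin N × Fin d), Set (lhsβ d N i) :=
  fun i => match i with
  | .inl j => A j
  | .inr p => B p.1 p.2

variable {Ω : Type*} [MeasurableSpace Ω] {μ : Measure Ω}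
  {π : Fin 2 → Ω → Equiv.Perm (Fin 2)} {U : Fin 2 → Ω → Fin 2 → ℝ}

lemma piece_meas (hind : iIndepFun (m := lhsMS 2 2) (lhsFun π U) μ)
    (A : Fin 2 → Set (Equiv.Perm (Fin 2))) (B : Fin 2 → Fin 2 → Set ℝ)
    (hB : ∀ n j, MeasurableSet (B n j)) :
    μ {ω | (∀ j, π j ω ∈ A j) ∧ ∀ n j, U n ω j ∈ B n j} =
      (∏ j, μ {ω | π j ω ∈ A j}) * ∏ n, ∏ j, μ {ω | U n ω j ∈ B n j} := by
  classical
  have H := hind.measure_inter_preimage_eq_mul (S := Finset.univ) (sets := lhsSets A B)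
    (by rintro (j | p) - ; exacts [MeasurableSpace.measurableSet_top, hB p.1 p.2])
  have hset : (⋂ i ∈ Finset.univ, lhsFun π U i ⁻¹' lhsSets A B i) =
      {ω | (∀ j, π j ω ∈ A j) ∧ ∀ n j, U n ω j ∈ B n j} := by
    ext ω
    simp only [Finset.mem_univ, Set.iInter_true, Set.mem_iInter, Set.mem_preimage,
      Set.mem_setOf_eq, Sum.forall, Prod.forall]
    exact Iff.rfl
  rw [hset] at H
  rw [H, Fintype.prod_sum_type, Fintype.prod_prod_type (fun p : Fin 2 × Fin 2 =>
    μ (lhsFun π U (Sum.inr p) ⁻¹' lhsSets A B (Sum.inr p)))]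
  rfl

lemma perm_meas {j : Fin 2}
    (hπ : Measure.map (π j) μ = (PMF.uniformOfFintype (Equiv.Perm (Fin 2))).toMeasure)
    (σ : Equiv.Perm (Fin 2)) : μ {ω | π j ω = σ} = 2⁻¹ := by
  have hae : AEMeasurable (π j) μ := by
    by_contra hc
    rw [Measure.map_of_not_aemeasurable hc] at hπ
    have h1 : ((PMF.uniformOfFintype (Equiv.Perm (Fin 2))).toMeasure) Set.univ = 1 := measure_univ
    rw [← hπ] at h1
    simp at h1
  have hs : {ω | π j ω = σ} = π j ⁻¹' {σ} := rfl
  rw [hs, ← Measure.map_apply_of_aemeasurable hae MeasurableSpace.measurableSet_top, hπ,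
    PMF.toMeasure_apply_singleton _ _ MeasurableSpace.measurableSet_top,
    PMF.uniformOfFintype_apply]
  norm_num [Fintype.card_perm]

lemma U_meas {n j : Fin 2}
    (hU : Measure.map (fun ω => U n ω j) μ = volume.restrict (Set.Ico (0:ℝ) 1))
    {s : Set ℝ} (hs : MeasurableSet s) :
    μ {ω | U n ω j ∈ s} = volume (s ∩ Set.Ico (0:ℝ) 1) := by
  have hae : AEMeasurable (fun ω => U n ω j) μ := by
    by_contra hc
    rw [Measure.map_of_not_aemeasurable hc] at hU
    have := congrArg (fun m : Measure ℝ => m (Set.Ico (0:ℝ) 1)) hU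
    simp [Real.volume_Ico] at this
  have h : {ω | U n ω j ∈ s} = (fun ω => U n ω j) ⁻¹' s := rfl
  rw [h, ← Measure.map_apply_of_aemeasurable hae hs, hU, Measure.restrict_apply hs]


end Aux

/-- For a LHS of `2` points in `[0,1)^2` and
`D(ε) = [0,1/2+ε)^2 \ [0,1/2)^2` with `ε ∈ (0,1/2)`:
`P(X_1, X_2 ∈ D(ε)) = 2ε²`, `P(X_i ∈ D(ε)) = ε(1+ε)`, and the ratio tends to `2`. -/
theorem stmt8 {Ω : Type*} [MeasurableSpace Ω] (μ : Measure Ω) [IsProbabilityMeasure μ]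
    (X : Fin 2 → Ω → Fin 2 → ℝ) (π : Fin 2 → Ω → Equiv.Perm (Fin 2))
    (U : Fin 2 → Ω → Fin 2 → ℝ) (h : IsLHS μ 2 2 X π U)
    (D : ℝ → Set (Fin 2 → ℝ))
    (hD : ∀ ε : ℝ, D ε = anchoredBox (fun _ => 1 / 2 + ε) \ anchoredBox (fun _ => 1 / 2)) :
    (∀ ε ∈ Set.Ioo (0 : ℝ) (1 / 2),
      μ {ω | X 0 ω ∈ D ε ∧ X 1 ω ∈ D ε} = ENNReal.ofReal (2 * ε ^ 2) ∧
      ∀ i, μ {ω | X i ω ∈ D ε} = ENNReal.ofReal (ε * (1 + ε))) ∧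
    Filter.Tendsto
      (fun ε : ℝ => (μ {ω | X 0 ω ∈ D ε ∧ X 1 ω ∈ D ε}).toReal /
        ((μ {ω | X 0 ω ∈ D ε}).toReal * (μ {ω | X 1 ω ∈ D ε}).toReal))
      (nhdsWithin 0 (Set.Ioi 0)) (nhds 2) := by
  classical
  obtain ⟨hπ, hU, hind, hX⟩ := h
  set G : Set Ω := {ω | ∀ n j : Fin 2, U n ω j ∈ Set.Ico (0:ℝ) 1} with hGdef
  have hXv : ∀ n j ω, X n ω j = (((π j ω n : Fin 2) : ℕ) + U n ω j) / 2 := by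
    intro n j ω; rw [hX n j ω]; norm_num
  have hGc : μ Gᶜ = 0 := by
    have hsub : Gᶜ ⊆ ⋃ n : Fin 2, ⋃ j : Fin 2, {ω | U n ω j ∈ (Set.Ico (0:ℝ) 1)ᶜ} := by
      intro ω hω
      simp only [hGdef, Set.mem_compl_iff, Set.mem_setOf_eq, not_forall] at hω
      obtain ⟨n, j, hnj⟩ := hω
      exact Set.mem_iUnion.2 ⟨n, Set.mem_iUnion.2 ⟨j, hnj⟩⟩
    refine measure_mono_null hsub
      (measure_iUnion_null fun n => measure_iUnion_null fun j => ?_)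
    rw [U_meas (hU n j) measurableSet_Ico.compl]
    simp
  have hmem : ∀ ε : ℝ, 0 < ε → ε < 1/2 → ∀ n ω, ω ∈ G →
      (X n ω ∈ D ε ↔ ((π 0 ω n = 1 → U n ω 0 ∈ Set.Ico (0:ℝ) (2*ε)) ∧
        (π 1 ω n = 1 → U n ω 1 ∈ Set.Ico (0:ℝ) (2*ε)) ∧
        (π 0 ω n = 1 ∨ π 1 ω n = 1))) := by
    intro ε hε hε' n ω hω
    have h0 : U n ω 0 ∈ Set.Ico (0:ℝ) 1 := hω n 0
    have h1 : U n ω 1 ∈ Set.Ico (0:ℝ) 1 := hω n 1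
    rw [hD]
    simp only [Set.mem_diff, anchoredBox, Set.mem_setOf_eq, Fin.forall_fin_two, hXv]
    rw [coordA hε hε' _ h0, coordA hε hε' _ h1, coordB _ h0, coordB _ h1]
    have hne : ∀ a : Fin 2, ¬(a = 0 ∧ a = 1) := by decide
    constructor
    · rintro ⟨⟨hA, hB⟩, hC⟩
      refine ⟨hA, hB, ?_⟩
      rcases fin2 (π 0 ω n) with h | h
      · rcases fin2 (π 1 ω n) with h' | h'
        · exact absurd ⟨h, h'⟩ hC
        · exact Or.inr h'
      · exact Or.inl h
    · rintro ⟨hA, hB, hC⟩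
      refine ⟨⟨hA, hB⟩, ?_⟩
      rintro ⟨ha, hb⟩
      rcases hC with h' | h'
      · exact hne _ ⟨ha, h'⟩
      · exact hne _ ⟨hb, h'⟩
  have hπae : ∀ j, AEMeasurable (π j) μ := by
    intro j
    by_contra hc
    have hm := hπ j
    rw [Measure.map_of_not_aemeasurable hc] at hm
    have h1 : ((PMF.uniformOfFintype (Equiv.Perm (Fin 2))).toMeasure) Set.univ = 1 := measure_univ
    rw [← hm] at h1
    simp at h1
  have hUae : ∀ n j, AEMeasurable (fun ω => U n ω j) μ := by
    intro n j
    by_contra hc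
    have hm := hU n j
    rw [Measure.map_of_not_aemeasurable hc] at hm
    have h1 := congrArg (fun m : Measure ℝ => m (Set.Ico (0:ℝ) 1)) hm
    simp [Real.volume_Ico] at h1
  have hpiece : ∀ (σ τ : Equiv.Perm (Fin 2)) (B : Fin 2 → Fin 2 → Set ℝ),
      (∀ n j, MeasurableSet (B n j)) →
      μ {ω | (π 0 ω = σ ∧ π 1 ω = τ) ∧ ∀ n j, U n ω j ∈ B n j} =
        2⁻¹ * 2⁻¹ * ((volume (B 0 0 ∩ Set.Ico (0:ℝ) 1) * volume (B 0 1 ∩ Set.Ico (0:ℝ) 1)) *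
          (volume (B 1 0 ∩ Set.Ico (0:ℝ) 1) * volume (B 1 1 ∩ Set.Ico (0:ℝ) 1))) := by
    intro σ τ B hB
    have hs : {ω | (π 0 ω = σ ∧ π 1 ω = τ) ∧ ∀ n j, U n ω j ∈ B n j} =
        {ω | (∀ j, π j ω ∈ (![{σ}, {τ}] : Fin 2 → Set (Equiv.Perm (Fin 2))) j) ∧
          ∀ n j, U n ω j ∈ B n j} := by
      ext ω
      simp [Fin.forall_fin_two]
    rw [hs, piece_meas hind _ _ hB, Fin.prod_univ_two, Fin.prod_univ_two,
      Fin.prod_univ_two, Fin.prod_univ_two]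
    simp only [Matrix.cons_val_zero, Matrix.cons_val_one, Matrix.head_cons,
      Set.mem_singleton_iff]
    rw [perm_meas (hπ 0), perm_meas (hπ 1),
      U_meas (hU 0 0) (hB 0 0), U_meas (hU 0 1) (hB 0 1),
      U_meas (hU 1 0) (hB 1 0), U_meas (hU 1 1) (hB 1 1)]
  have hNM : ∀ (σ τ : Equiv.Perm (Fin 2)) (B : Fin 2 → Fin 2 → Set ℝ),
      (∀ n j, MeasurableSet (B n j)) →
      NullMeasurableSet {ω | (π 0 ω = σ ∧ π 1 ω = τ) ∧ ∀ n j, U n ω j ∈ B n j} μ := by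
    intro σ τ B hB
    have hs : {ω | (π 0 ω = σ ∧ π 1 ω = τ) ∧ ∀ n j, U n ω j ∈ B n j} =
        (π 0 ⁻¹' {σ}) ∩ ((π 1 ⁻¹' {τ}) ∩
          ⋂ n : Fin 2, ⋂ j : Fin 2, (fun ω => U n ω j) ⁻¹' B n j) := by
      ext ω
      simp only [Set.mem_inter_iff, Set.mem_preimage, Set.mem_singleton_iff, Set.mem_iInter,
        Set.mem_setOf_eq]
      tauto
    rw [hs]
    exact ((hπae 0).nullMeasurableSet_preimage MeasurableSpace.measurableSet_top).inter
      (((hπae 1).nullMeasurableSet_preimage MeasurableSpace.measurableSet_top).inter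
        (NullMeasurableSet.iInter fun n => NullMeasurableSet.iInter fun j =>
          (hUae n j).nullMeasurableSet_preimage (hB n j)))
  have hdisj : ∀ (σ τ σ' τ' : Equiv.Perm (Fin 2)) (B B' : Fin 2 → Fin 2 → Set ℝ),
      (σ ≠ σ' ∨ τ ≠ τ') →
      Disjoint {ω | (π 0 ω = σ ∧ π 1 ω = τ) ∧ ∀ n j, U n ω j ∈ B n j}
        {ω | (π 0 ω = σ' ∧ π 1 ω = τ') ∧ ∀ n j, U n ω j ∈ B' n j} := by
    intro σ τ σ' τ' B B' hne
    rw [Set.disjoint_left]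
    rintro ω ⟨⟨ha, hb⟩, -⟩ ⟨⟨ha', hb'⟩, -⟩
    rcases hne with h' | h'
    · exact h' (by rw [← ha, ha'])
    · exact h' (by rw [← hb, hb'])
  have hsw : (1 : Equiv.Perm (Fin 2)) ≠ Equiv.swap 0 1 := by decide
  have hswv0 : Equiv.swap (0:Fin 2) 1 0 = 1 := Equiv.swap_apply_left 0 1
  have hswv1 : Equiv.swap (0:Fin 2) 1 1 = 0 := Equiv.swap_apply_right 0 1
  have e2 : (2 : ℝ≥0∞)⁻¹ = ENNReal.ofReal (2⁻¹) := by
    rw [ENNReal.ofReal_inv_of_pos (by norm_num)]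
    norm_num
  have hII : volume (Set.Ico (0:ℝ) 1 ∩ Set.Ico (0:ℝ) 1) = 1 := by
    rw [Set.inter_self, Real.volume_Ico]
    norm_num
  -- the key computation for fixed ε
  have key : ∀ ε ∈ Set.Ioo (0 : ℝ) (1 / 2),
      μ {ω | X 0 ω ∈ D ε ∧ X 1 ω ∈ D ε} = ENNReal.ofReal (2 * ε ^ 2) ∧
      ∀ i, μ {ω | X i ω ∈ D ε} = ENNReal.ofReal (ε * (1 + ε)) := by
    rintro ε ⟨hε, hε'⟩
    have h2ε : 2*ε ≤ 1 := by linarith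
    have hJsub : Set.Ico (0:ℝ) (2*ε) ⊆ Set.Ico (0:ℝ) 1 := Set.Ico_subset_Ico_right h2ε
    have hJI : volume (Set.Ico (0:ℝ) (2*ε) ∩ Set.Ico (0:ℝ) 1) = ENNReal.ofReal (2*ε) := by
      rw [Set.Ico_inter_Ico, max_self, min_eq_left h2ε, Real.volume_Ico, sub_zero]
    have harithA : (2⁻¹ * 2⁻¹ : ℝ≥0∞) * ENNReal.ofReal (2*ε) = ENNReal.ofReal (ε/2) := by
      rw [e2, ← ENNReal.ofReal_mul (by linarith), ← ENNReal.ofReal_mul (by linarith)]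
      congr 1
      ring
    have harithB : (2⁻¹ * 2⁻¹ : ℝ≥0∞) * (ENNReal.ofReal (2*ε) * ENNReal.ofReal (2*ε)) =
        ENNReal.ofReal (ε*ε) := by
      rw [e2, ← ENNReal.ofReal_mul (by linarith), ← ENNReal.ofReal_mul (by linarith),
        ← ENNReal.ofReal_mul (by linarith)]
      congr 1
      ring
    set I : Set ℝ := Set.Ico (0:ℝ) 1 with hIdef
    set J : Set ℝ := Set.Ico (0:ℝ) (2*ε) with hJdef
    have hmM : ∀ (B : Fin 2 → Fin 2 → Set ℝ), (∀ n j, B n j = I ∨ B n j = J) →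
        ∀ n j, MeasurableSet (B n j) := by
      intro B hB n j
      rcases hB n j with h' | h' <;> rw [h'] <;> exact measurableSet_Ico
    have hsubM : ∀ (B : Fin 2 → Fin 2 → Set ℝ), (∀ n j, B n j = I ∨ B n j = J) →
        ∀ n j, B n j ⊆ I := by
      intro B hB n j
      rcases hB n j with h' | h'
      · rw [h']
      · rw [h']
        exact hJsub
    -- the eight piece matrices
    set C1 : Fin 2 → Fin 2 → Set ℝ := ![![I, J], ![J, I]] with hC1def
    set C2 : Fin 2 → Fin 2 → Set ℝ := ![![J, I], ![I, J]] with hC2def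
    set D1 : Fin 2 → Fin 2 → Set ℝ := ![![I, J], ![I, I]] with hD1def
    set D2 : Fin 2 → Fin 2 → Set ℝ := ![![J, I], ![I, I]] with hD2def
    set D3 : Fin 2 → Fin 2 → Set ℝ := ![![J, J], ![I, I]] with hD3def
    set E1 : Fin 2 → Fin 2 → Set ℝ := ![![I, I], ![J, I]] with hE1def
    set E2 : Fin 2 → Fin 2 → Set ℝ := ![![I, I], ![I, J]] with hE2def
    set E3 : Fin 2 → Fin 2 → Set ℝ := ![![I, I], ![J, J]] with hE3def
    have hC1e : ∀ n j, C1 n j = I ∨ C1 n j = J := by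
      intro n j; fin_cases n <;> fin_cases j <;> simp [hC1def]
    have hC2e : ∀ n j, C2 n j = I ∨ C2 n j = J := by
      intro n j; fin_cases n <;> fin_cases j <;> simp [hC2def]
    have hD1e : ∀ n j, D1 n j = I ∨ D1 n j = J := by
      intro n j; fin_cases n <;> fin_cases j <;> simp [hD1def]
    have hD2e : ∀ n j, D2 n j = I ∨ D2 n j = J := by
      intro n j; fin_cases n <;> fin_cases j <;> simp [hD2def]
    have hD3e : ∀ n j, D3 n j = I ∨ D3 n j = J := by
      intro n j; fin_cases n <;> fin_cases j <;> simp [hD3def]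
    have hE1e : ∀ n j, E1 n j = I ∨ E1 n j = J := by
      intro n j; fin_cases n <;> fin_cases j <;> simp [hE1def]
    have hE2e : ∀ n j, E2 n j = I ∨ E2 n j = J := by
      intro n j; fin_cases n <;> fin_cases j <;> simp [hE2def]
    have hE3e : ∀ n j, E3 n j = I ∨ E3 n j = J := by
      intro n j; fin_cases n <;> fin_cases j <;> simp [hE3def]
    -- joint event decomposition
    have hEJ : {ω | X 0 ω ∈ D ε ∧ X 1 ω ∈ D ε} ∩ G =
        {ω | (π 0 ω = 1 ∧ π 1 ω = Equiv.swap 0 1) ∧ ∀ n j, U n ω j ∈ C1 n j} ∪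
        {ω | (π 0 ω = Equiv.swap 0 1 ∧ π 1 ω = 1) ∧ ∀ n j, U n ω j ∈ C2 n j} := by
      ext ω
      simp only [Set.mem_inter_iff, Set.mem_union, Set.mem_setOf_eq]
      constructor
      · rintro ⟨⟨h0, h1⟩, hG⟩
        rw [hmem ε hε hε' 0 ω hG] at h0
        rw [hmem ε hε hε' 1 ω hG] at h1
        rcases perm_fin_two (π 0 ω) with hσ | hσ <;> rcases perm_fin_two (π 1 ω) with hτ | hτ
        · rw [hσ, hτ] at h0
          simp at h0
        · refine Or.inl ⟨⟨hσ, hτ⟩, ?_⟩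
          intro n j
          fin_cases n <;> fin_cases j <;>
            simp only [hC1def, Matrix.cons_val_zero, Matrix.cons_val_one, Matrix.head_cons]
          · exact hG 0 0
          · exact h0.2.1 (by rw [hτ]; exact hswv0)
          · exact h1.1 (by rw [hσ]; rfl)
          · exact hG 1 1
        · refine Or.inr ⟨⟨hσ, hτ⟩, ?_⟩
          intro n j
          fin_cases n <;> fin_cases j <;>
            simp only [hC2def, Matrix.cons_val_zero, Matrix.cons_val_one, Matrix.head_cons]
          · exact h0.1 (by rw [hσ]; exact hswv0)
          · exact hG 0 1
          · exact hG 1 0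
          · exact h1.2.1 (by rw [hτ]; rfl)
        · rw [hσ, hτ] at h1
          simp at h1
      · have hGof : ∀ (B : Fin 2 → Fin 2 → Set ℝ), (∀ n j, B n j = I ∨ B n j = J) →
            (∀ n j, U n ω j ∈ B n j) → ω ∈ G := by
          intro B hBe hB n j
          exact hsubM B hBe n j (hB n j)
        rintro (⟨⟨hσ, hτ⟩, hB⟩ | ⟨⟨hσ, hτ⟩, hB⟩)
        · have hG : ω ∈ G := hGof C1 hC1e hB
          refine ⟨⟨?_, ?_⟩, hG⟩
          · rw [hmem ε hε hε' 0 ω hG]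
            refine ⟨?_, ?_, ?_⟩
            · intro hc; rw [hσ] at hc; exact absurd hc (by decide)
            · intro _; simpa [hC1def, hJdef] using hB 0 1
            · right; rw [hτ]; exact hswv0
          · rw [hmem ε hε hε' 1 ω hG]
            refine ⟨?_, ?_, ?_⟩
            · intro _; simpa [hC1def, hJdef] using hB 1 0
            · intro hc; rw [hτ, hswv1] at hc; exact absurd hc (by decide)
            · left; rw [hσ]; rfl
        · have hG : ω ∈ G := hGof C2 hC2e hB
          refine ⟨⟨?_, ?_⟩, hG⟩
          · rw [hmem ε hε hε' 0 ω hG]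
            refine ⟨?_, ?_, ?_⟩
            · intro _; simpa [hC2def, hJdef] using hB 0 0
            · intro hc; rw [hτ] at hc; exact absurd hc (by decide)
            · left; rw [hσ]; exact hswv0
          · rw [hmem ε hε hε' 1 ω hG]
            refine ⟨?_, ?_, ?_⟩
            · intro hc; rw [hσ, hswv1] at hc; exact absurd hc (by decide)
            · intro _; simpa [hC2def, hJdef] using hB 1 1
            · right; rw [hτ]; rfl
    -- single event decompositions
    have hE0 : {ω | X 0 ω ∈ D ε} ∩ G =
        {ω | (π 0 ω = 1 ∧ π 1 ω = Equiv.swap 0 1) ∧ ∀ n j, U n ω j ∈ D1 n j} ∪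
        ({ω | (π 0 ω = Equiv.swap 0 1 ∧ π 1 ω = 1) ∧ ∀ n j, U n ω j ∈ D2 n j} ∪
         {ω | (π 0 ω = Equiv.swap 0 1 ∧ π 1 ω = Equiv.swap 0 1) ∧ ∀ n j, U n ω j ∈ D3 n j}) := by
      ext ω
      simp only [Set.mem_inter_iff, Set.mem_union, Set.mem_setOf_eq]
      constructor
      · rintro ⟨h0, hG⟩
        rw [hmem ε hε hε' 0 ω hG] at h0
        rcases perm_fin_two (π 0 ω) with hσ | hσ <;> rcases perm_fin_two (π 1 ω) with hτ | hτ
        · rw [hσ, hτ] at h0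
          simp at h0
        · refine Or.inl ⟨⟨hσ, hτ⟩, ?_⟩
          intro n j
          fin_cases n <;> fin_cases j <;>
            simp only [hD1def, Matrix.cons_val_zero, Matrix.cons_val_one, Matrix.head_cons]
          · exact hG 0 0
          · exact h0.2.1 (by rw [hτ]; exact hswv0)
          · exact hG 1 0
          · exact hG 1 1
        · refine Or.inr (Or.inl ⟨⟨hσ, hτ⟩, ?_⟩)
          intro n j
          fin_cases n <;> fin_cases j <;>
            simp only [hD2def, Matrix.cons_val_zero, Matrix.cons_val_one, Matrix.head_cons]
          · exact h0.1 (by rw [hσ]; exact hswv0)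
          · exact hG 0 1
          · exact hG 1 0
          · exact hG 1 1
        · refine Or.inr (Or.inr ⟨⟨hσ, hτ⟩, ?_⟩)
          intro n j
          fin_cases n <;> fin_cases j <;>
            simp only [hD3def, Matrix.cons_val_zero, Matrix.cons_val_one, Matrix.head_cons]
          · exact h0.1 (by rw [hσ]; exact hswv0)
          · exact h0.2.1 (by rw [hτ]; exact hswv0)
          · exact hG 1 0
          · exact hG 1 1
      · have hGof : ∀ (B : Fin 2 → Fin 2 → Set ℝ), (∀ n j, B n j = I ∨ B n j = J) →
            (∀ n j, U n ω j ∈ B n j) → ω ∈ G := by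
          intro B hBe hB n j
          exact hsubM B hBe n j (hB n j)
        rintro (⟨⟨hσ, hτ⟩, hB⟩ | ⟨⟨hσ, hτ⟩, hB⟩ | ⟨⟨hσ, hτ⟩, hB⟩)
        · have hG : ω ∈ G := hGof D1 hD1e hB
          refine ⟨?_, hG⟩
          rw [hmem ε hε hε' 0 ω hG]
          refine ⟨?_, ?_, ?_⟩
          · intro hc; rw [hσ] at hc; exact absurd hc (by decide)
          · intro _; simpa [hD1def, hJdef] using hB 0 1
          · right; rw [hτ]; exact hswv0
        · have hG : ω ∈ G := hGof D2 hD2e hB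
          refine ⟨?_, hG⟩
          rw [hmem ε hε hε' 0 ω hG]
          refine ⟨?_, ?_, ?_⟩
          · intro _; simpa [hD2def, hJdef] using hB 0 0
          · intro hc; rw [hτ] at hc; exact absurd hc (by decide)
          · left; rw [hσ]; exact hswv0
        · have hG : ω ∈ G := hGof D3 hD3e hB
          refine ⟨?_, hG⟩
          rw [hmem ε hε hε' 0 ω hG]
          refine ⟨?_, ?_, ?_⟩
          · intro _; simpa [hD3def, hJdef] using hB 0 0
          · intro _; simpa [hD3def, hJdef] using hB 0 1
          · left; rw [hσ]; exact hswv0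
    have hE1' : {ω | X 1 ω ∈ D ε} ∩ G =
        {ω | (π 0 ω = 1 ∧ π 1 ω = Equiv.swap 0 1) ∧ ∀ n j, U n ω j ∈ E1 n j} ∪
        ({ω | (π 0 ω = Equiv.swap 0 1 ∧ π 1 ω = 1) ∧ ∀ n j, U n ω j ∈ E2 n j} ∪
         {ω | (π 0 ω = 1 ∧ π 1 ω = 1) ∧ ∀ n j, U n ω j ∈ E3 n j}) := by
      ext ω
      simp only [Set.mem_inter_iff, Set.mem_union, Set.mem_setOf_eq]
      constructor
      · rintro ⟨h1, hG⟩
        rw [hmem ε hε hε' 1 ω hG] at h1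
        rcases perm_fin_two (π 0 ω) with hσ | hσ <;> rcases perm_fin_two (π 1 ω) with hτ | hτ
        · refine Or.inr (Or.inr ⟨⟨hσ, hτ⟩, ?_⟩)
          intro n j
          fin_cases n <;> fin_cases j <;>
            simp only [hE3def, Matrix.cons_val_zero, Matrix.cons_val_one, Matrix.head_cons]
          · exact hG 0 0
          · exact hG 0 1
          · exact h1.1 (by rw [hσ]; rfl)
          · exact h1.2.1 (by rw [hτ]; rfl)
        · refine Or.inl ⟨⟨hσ, hτ⟩, ?_⟩
          intro n j
          fin_cases n <;> fin_cases j <;>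
            simp only [hE1def, Matrix.cons_val_zero, Matrix.cons_val_one, Matrix.head_cons]
          · exact hG 0 0
          · exact hG 0 1
          · exact h1.1 (by rw [hσ]; rfl)
          · exact hG 1 1
        · refine Or.inr (Or.inl ⟨⟨hσ, hτ⟩, ?_⟩)
          intro n j
          fin_cases n <;> fin_cases j <;>
            simp only [hE2def, Matrix.cons_val_zero, Matrix.cons_val_one, Matrix.head_cons]
          · exact hG 0 0
          · exact hG 0 1
          · exact hG 1 0
          · exact h1.2.1 (by rw [hτ]; rfl)
        · rw [hσ, hτ] at h1
          simp at h1
      · have hGof : ∀ (B : Fin 2 → Fin 2 → Set ℝ), (∀ n j, B n j = I ∨ B n j = J) →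
            (∀ n j, U n ω j ∈ B n j) → ω ∈ G := by
          intro B hBe hB n j
          exact hsubM B hBe n j (hB n j)
        rintro (⟨⟨hσ, hτ⟩, hB⟩ | ⟨⟨hσ, hτ⟩, hB⟩ | ⟨⟨hσ, hτ⟩, hB⟩)
        · have hG : ω ∈ G := hGof E1 hE1e hB
          refine ⟨?_, hG⟩
          rw [hmem ε hε hε' 1 ω hG]
          refine ⟨?_, ?_, ?_⟩
          · intro _; simpa [hE1def, hJdef] using hB 1 0
          · intro hc; rw [hτ, hswv1] at hc; exact absurd hc (by decide)
          · left; rw [hσ]; rfl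
        · have hG : ω ∈ G := hGof E2 hE2e hB
          refine ⟨?_, hG⟩
          rw [hmem ε hε hε' 1 ω hG]
          refine ⟨?_, ?_, ?_⟩
          · intro hc; rw [hσ, hswv1] at hc; exact absurd hc (by decide)
          · intro _; simpa [hE2def, hJdef] using hB 1 1
          · right; rw [hτ]; rfl
        · have hG : ω ∈ G := hGof E3 hE3e hB
          refine ⟨?_, hG⟩
          rw [hmem ε hε hε' 1 ω hG]
          refine ⟨?_, ?_, ?_⟩
          · intro _; simpa [hE3def, hJdef] using hB 1 0
          · intro _; simpa [hE3def, hJdef] using hB 1 1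
          · left; rw [hσ]; rfl
    -- piece measures
    have hQ1v : μ {ω | (π 0 ω = 1 ∧ π 1 ω = Equiv.swap 0 1) ∧ ∀ n j, U n ω j ∈ C1 n j} =
        ENNReal.ofReal (ε*ε) := by
      rw [hpiece _ _ _ (hmM C1 hC1e)]
      simp only [hC1def, Matrix.cons_val_zero, Matrix.cons_val_one, Matrix.head_cons]
      rw [hII, hJI]
      simp only [one_mul, mul_one]
      rw [harithB]
    have hQ2v : μ {ω | (π 0 ω = Equiv.swap 0 1 ∧ π 1 ω = 1) ∧ ∀ n j, U n ω j ∈ C2 n j} =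
        ENNReal.ofReal (ε*ε) := by
      rw [hpiece _ _ _ (hmM C2 hC2e)]
      simp only [hC2def, Matrix.cons_val_zero, Matrix.cons_val_one, Matrix.head_cons]
      rw [hII, hJI]
      simp only [one_mul, mul_one]
      rw [harithB]
    have hR1v : μ {ω | (π 0 ω = 1 ∧ π 1 ω = Equiv.swap 0 1) ∧ ∀ n j, U n ω j ∈ D1 n j} =
        ENNReal.ofReal (ε/2) := by
      rw [hpiece _ _ _ (hmM D1 hD1e)]
      simp only [hD1def, Matrix.cons_val_zero, Matrix.cons_val_one, Matrix.head_cons]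
      rw [hII, hJI]
      simp only [one_mul, mul_one]
      rw [harithA]
    have hR2v : μ {ω | (π 0 ω = Equiv.swap 0 1 ∧ π 1 ω = 1) ∧ ∀ n j, U n ω j ∈ D2 n j} =
        ENNReal.ofReal (ε/2) := by
      rw [hpiece _ _ _ (hmM D2 hD2e)]
      simp only [hD2def, Matrix.cons_val_zero, Matrix.cons_val_one, Matrix.head_cons]
      rw [hII, hJI]
      simp only [one_mul, mul_one]
      rw [harithA]
    have hR3v : μ {ω | (π 0 ω = Equiv.swap 0 1 ∧ π 1 ω = Equiv.swap 0 1) ∧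
        ∀ n j, U n ω j ∈ D3 n j} = ENNReal.ofReal (ε*ε) := by
      rw [hpiece _ _ _ (hmM D3 hD3e)]
      simp only [hD3def, Matrix.cons_val_zero, Matrix.cons_val_one, Matrix.head_cons]
      rw [hII, hJI]
      simp only [one_mul, mul_one]
      rw [harithB]
    have hS1v : μ {ω | (π 0 ω = 1 ∧ π 1 ω = Equiv.swap 0 1) ∧ ∀ n j, U n ω j ∈ E1 n j} =
        ENNReal.ofReal (ε/2) := by
      rw [hpiece _ _ _ (hmM E1 hE1e)]
      simp only [hE1def, Matrix.cons_val_zero, Matrix.cons_val_one, Matrix.head_cons]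
      rw [hII, hJI]
      simp only [one_mul, mul_one]
      rw [harithA]
    have hS2v : μ {ω | (π 0 ω = Equiv.swap 0 1 ∧ π 1 ω = 1) ∧ ∀ n j, U n ω j ∈ E2 n j} =
        ENNReal.ofReal (ε/2) := by
      rw [hpiece _ _ _ (hmM E2 hE2e)]
      simp only [hE2def, Matrix.cons_val_zero, Matrix.cons_val_one, Matrix.head_cons]
      rw [hII, hJI]
      simp only [one_mul, mul_one]
      rw [harithA]
    have hS3v : μ {ω | (π 0 ω = 1 ∧ π 1 ω = 1) ∧ ∀ n j, U n ω j ∈ E3 n j} =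
        ENNReal.ofReal (ε*ε) := by
      rw [hpiece _ _ _ (hmM E3 hE3e)]
      simp only [hE3def, Matrix.cons_val_zero, Matrix.cons_val_one, Matrix.head_cons]
      rw [hII, hJI]
      simp only [one_mul, mul_one]
      rw [harithB]
    -- assemble
    have hswne : Equiv.swap (0:Fin 2) 1 ≠ 1 := fun hcc => hsw hcc.symm
    constructor
    · rw [← measure_inter_conull hGc, hEJ,
        measure_union₀ (hNM _ _ _ (hmM C2 hC2e)) ((hdisj _ _ _ _ _ _ (Or.inl hsw)).aedisjoint),
        hQ1v, hQ2v, ← ENNReal.ofReal_add (by positivity) (by positivity)]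
      congr 1
      ring
    · intro i
      rcases fin2 i with rfl | rfl
      · rw [← measure_inter_conull hGc, hE0,
          measure_union₀ ((hNM _ _ _ (hmM D2 hD2e)).union (hNM _ _ _ (hmM D3 hD3e)))
            (Disjoint.aedisjoint (Set.disjoint_union_right.2
              ⟨hdisj _ _ _ _ _ _ (Or.inl hsw), hdisj _ _ _ _ _ _ (Or.inl hsw)⟩)),
          measure_union₀ (hNM _ _ _ (hmM D3 hD3e)) ((hdisj _ _ _ _ _ _ (Or.inr hsw)).aedisjoint),
          hR1v, hR2v, hR3v,
          ← ENNReal.ofReal_add (by positivity) (by positivity),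
          ← ENNReal.ofReal_add (by positivity) (by positivity)]
        congr 1
        ring
      · rw [← measure_inter_conull hGc, hE1',
          measure_union₀ ((hNM _ _ _ (hmM E2 hE2e)).union (hNM _ _ _ (hmM E3 hE3e)))
            (Disjoint.aedisjoint (Set.disjoint_union_right.2
              ⟨hdisj _ _ _ _ _ _ (Or.inl hsw), hdisj _ _ _ _ _ _ (Or.inr hswne)⟩)),
          measure_union₀ (hNM _ _ _ (hmM E3 hE3e)) ((hdisj _ _ _ _ _ _ (Or.inl hswne)).aedisjoint),
          hS1v, hS2v, hS3v,
          ← ENNReal.ofReal_add (by positivity) (by positivity),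
          ← ENNReal.ofReal_add (by positivity) (by positivity)]
        congr 1
        ring
  refine ⟨key, ?_⟩
  have htend : Filter.Tendsto (fun ε : ℝ => 2 / (1+ε)^2) (nhdsWithin 0 (Set.Ioi 0)) (nhds 2) := by
    have hc : ContinuousAt (fun ε : ℝ => 2 / (1+ε)^2) 0 :=
      ContinuousAt.div continuousAt_const
        (((continuous_const.add continuous_id).pow 2).continuousAt) (by norm_num)
    have := hc.tendsto
    norm_num at this
    exact this.mono_left nhdsWithin_le_nhds
  refine Filter.Tendsto.congr' ?_ htend
  filter_upwards [Ioo_mem_nhdsGT_of_mem (by norm_num : (0:ℝ) ∈ Set.Ico 0 (1/2))] with ε hε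
  obtain ⟨hJv, hSv⟩ := key ε hε
  obtain ⟨hε0, hε1⟩ := hε
  rw [hJv, hSv 0, hSv 1,
    ENNReal.toReal_ofReal (show (0:ℝ) ≤ 2 * ε ^ 2 by positivity),
    ENNReal.toReal_ofReal (show (0:ℝ) ≤ ε * (1 + ε) by nlinarith)]
  have h1ε : (1:ℝ) + ε ≠ 0 := by linarith
  have hεne : ε ≠ 0 := ne_of_gt hε0
  field_simp

end LHSPaper
end

section
/- Let b, d ≥ 2 and m ≥ t ≥ 0 be integers, let P = (p^{(n)})_{n=1}^{b^m} be a (t,m,d)-net in base b, and let σ_1, …, σ_d : [0,1) → [0,1) be b-ary scramblings of depth m−t. Then the point family σ(P) = (σ(p^{(n)}))_{n=1}^{b^m}, where σ(p) = (σ_1(p_1), …, σ_d(p_d)), is again a (t,m,d)-net in base b. -/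
open MeasureTheory ProbabilityTheory Filter
open scoped ENNReal Classical

namespace LHSPaper

private lemma floor_mem_aux (B : ℕ) (hB : 0 < B) (x : ℝ) (hx : x ∈ Set.Ico (0:ℝ) 1) :
    ∃ c < B, x ∈ Set.Ico ((c:ℝ)/(B:ℝ)) (((c:ℝ)+1)/(B:ℝ)) := by
  have hB' : (0:ℝ) < B := by exact_mod_cast hB
  refine ⟨⌊x * B⌋₊, ?_, ?_, ?_⟩
  · have h1 : x * B < B := by nlinarith [hx.1, hx.2]
    have := (Nat.floor_lt (mul_nonneg hx.1 hB'.le)).2 (by exact_mod_cast h1)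
    exact_mod_cast this
  · rw [div_le_iff₀ hB']
    exact Nat.floor_le (mul_nonneg hx.1 hB'.le)
  · rw [lt_div_iff₀ hB']
    exact Nat.lt_floor_add_one _

private lemma interval_unique_aux (B : ℝ) (hB : 0 < B) {a a' : ℕ} {x : ℝ}
    (h : x ∈ Set.Ico ((a:ℝ)/B) (((a:ℝ)+1)/B))
    (h' : x ∈ Set.Ico ((a':ℝ)/B) (((a':ℝ)+1)/B)) : a = a' := by
  have h1 : (a:ℝ)/B < ((a':ℝ)+1)/B := lt_of_le_of_lt h.1 h'.2
  have h2 : (a':ℝ)/B < ((a:ℝ)+1)/B := lt_of_le_of_lt h'.1 h.2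
  rw [div_lt_div_iff₀ hB hB] at h1 h2
  have ha1 : (a:ℝ) < a' + 1 := by nlinarith
  have ha2 : (a':ℝ) < a + 1 := by nlinarith
  have : a < a' + 1 := by exact_mod_cast ha1
  have : a' < a + 1 := by exact_mod_cast ha2
  omega

private lemma coord_key (b L k : ℕ) (hb : 2 ≤ b) (σ : ℝ → ℝ) (hσ : IsScrambling b L σ)
    (hk : k ≤ L) (a : ℕ) (ha : a < b ^ k) :
    ∃ c < b ^ k, ∀ x ∈ Set.Ico (0:ℝ) 1,
      (σ x ∈ Set.Ico ((a:ℝ)/(b:ℝ)^k) (((a:ℝ)+1)/(b:ℝ)^k) ↔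
       x ∈ Set.Ico ((c:ℝ)/(b:ℝ)^k) (((c:ℝ)+1)/(b:ℝ)^k)) := by
  have hcast : ((b ^ k : ℕ) : ℝ) = (b:ℝ)^k := by push_cast; ring
  have hBpos : 0 < b ^ k := Nat.pow_pos (by omega)
  rcases Nat.eq_zero_or_pos k with rfl | hk1
  · have ha0 : a = 0 := by simpa using ha
    subst ha0
    refine ⟨0, by norm_num, fun x hx => ?_⟩
    simp only [pow_zero, Nat.cast_zero, zero_add, zero_div, div_one]
    exact ⟨fun _ => hx, fun _ => hσ.1 x hx⟩
  · obtain ⟨f, hf1, hf2, hf3⟩ := hσ.2 k hk1 hk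
    obtain ⟨c, hc, hfc⟩ : ∃ c < b ^ k, f c = a := by
      let g : Fin (b ^ k) → Fin (b ^ k) := fun i => ⟨f i, hf1 i i.2⟩
      have hg : Function.Injective g := by
        intro i j hij
        by_contra hne
        exact hf2 i i.2 j j.2 (fun h' => hne (Fin.ext h')) (congrArg Fin.val hij)
      obtain ⟨i, hi⟩ := (Finite.injective_iff_surjective.1 hg) ⟨a, ha⟩
      exact ⟨i, i.2, congrArg Fin.val hi⟩
    refine ⟨c, hc, fun x hx => ⟨fun hσx => ?_, fun hxc => ?_⟩⟩
    · obtain ⟨c', hc', hxc'⟩ := floor_mem_aux (b ^ k) hBpos x hx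
      rw [hcast] at hxc'
      have hσx' := hf3 c' hc' x hxc'
      have hBpos' : (0:ℝ) < (b:ℝ)^k := by positivity
      have : f c' = a := interval_unique_aux ((b:ℝ)^k) hBpos' hσx' hσx
      have : c' = c := by
        by_contra hne
        exact hf2 c' hc' c hc hne (by rw [this, hfc])
      rwa [this] at hxc'
    · have := hf3 c hc x hxc
      rwa [hfc] at this

/-- Scrambling a `(t,m,d)`-net in base `b` by coordinatewise `b`-ary
scramblings of depth `m - t` yields again a `(t,m,d)`-net in base `b`. -/
theorem stmt9 (b d m t : ℕ) (hb : 2 ≤ b) (hd : 2 ≤ d) (ht : t ≤ m)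
    (P : Fin (b ^ m) → Fin d → ℝ) (hP : IsNet b d m t P)
    (σ : Fin d → ℝ → ℝ) (hσ : ∀ i, IsScrambling b (m - t) (σ i)) :
    IsNet b d m t (fun n i => σ i (P n i)) := by
  obtain ⟨hP1, hP2⟩ := hP
  refine ⟨fun n i => (hσ i).1 _ (hP1 n i), ?_⟩
  intro E hE
  obtain ⟨ℓ, a, haℓ, hsum, rfl⟩ := hE
  have hℓle : ∀ i, ℓ i ≤ m - t := fun i =>
    hsum ▸ Finset.single_le_sum (fun _ _ => Nat.zero_le _) (Finset.mem_univ i)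
  choose c hc hiff using fun i =>
    coord_key b (m - t) (ℓ i) hb (σ i) (hσ i) (hℓle i) (a i) (haℓ i)
  have hE' : IsElemInterval b d (m - t)
      {x | ∀ i, x i ∈ Set.Ico ((c i : ℝ) / b ^ ℓ i) (((c i : ℝ) + 1) / b ^ ℓ i)} :=
    ⟨ℓ, c, hc, hsum, rfl⟩
  rw [← hP2 _ hE']
  refine congrArg Finset.card ?_
  ext n
  simp only [Finset.mem_filter, Finset.mem_univ, true_and, Set.mem_setOf_eq]
  exact ⟨fun h i => (hiff i (P n i) (hP1 n i)).mp (h i),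
         fun h i => (hiff i (P n i) (hP1 n i)).mpr (h i)⟩

end LHSPaper
end

section
/- Let P = (p^{(1)}, p^{(2)}, p^{(3)}, p^{(4)}) be a (0,2,3)-net in base 2 such that p^{(4)} ∈ [3/4, 1)^3. Then each of the points p^{(1)}, p^{(2)}, p^{(3)} has exactly one coordinate entry in [1/2, 3/4) and its other two coordinate entries in [0, 1/2). -/
open MeasureTheory ProbabilityTheory Filter
open scoped ENNReal Classical

namespace LHSPaper

lemma card_single (P : Fin (2 ^ 2) → Fin 3 → ℝ) (hP : IsNet 2 3 2 0 P)
    (j : Fin 3) (aj : ℕ) (haj : aj < 4) :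
    (Finset.univ.filter fun n =>
      P n j ∈ Set.Ico ((aj : ℝ) / 4) (((aj : ℝ) + 1) / 4)).card = 1 := by
  have hcube := hP.1
  have hE : IsElemInterval 2 3 (2 - 0)
      {x : Fin 3 → ℝ | ∀ i, x i ∈ Set.Ico
        (((if i = j then aj else 0 : ℕ) : ℝ) / (2:ℝ) ^ (if i = j then 2 else 0))
        ((((if i = j then aj else 0 : ℕ) : ℝ) + 1) / (2:ℝ) ^ (if i = j then 2 else 0))} := by
    refine ⟨fun i => if i = j then 2 else 0, fun i => if i = j then aj else 0, ?_, ?_, by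
      push_cast; rfl⟩
    · intro i; by_cases hij : i = j <;> simp [hij] <;> omega
    · fin_cases j <;> simp [Fin.sum_univ_three]
  have h := hP.2 _ hE
  rw [pow_zero] at h
  rw [← h]
  congr 1
  ext n
  simp only [Finset.mem_filter, Finset.mem_univ, true_and, Set.mem_setOf_eq]
  constructor
  · intro hn i
    by_cases hij : i = j
    · subst hij
      simp only [if_pos rfl]
      constructor
      · calc ((aj:ℝ)) / 2 ^ 2 = (aj:ℝ)/4 := by norm_num
          _ ≤ P n i := hn.1
      · calc P n i < ((aj:ℝ)+1)/4 := hn.2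
          _ = ((aj:ℝ)+1) / 2 ^ 2 := by norm_num
    · simp only [if_neg hij]
      constructor
      · simpa using (hcube n i).1
      · simpa using (hcube n i).2
  · intro hn
    have := hn j
    simp only [if_pos rfl] at this
    constructor
    · calc ((aj:ℝ))/4 = (aj:ℝ)/2^2 := by norm_num
        _ ≤ P n j := this.1
    · calc P n j < ((aj:ℝ)+1)/2^2 := this.2
        _ = ((aj:ℝ)+1)/4 := by norm_num

lemma card_pair (P : Fin (2 ^ 2) → Fin 3 → ℝ) (hP : IsNet 2 3 2 0 P)
    (j j' : Fin 3) (hjj : j ≠ j') :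
    (Finset.univ.filter fun n =>
      (1/2 : ℝ) ≤ P n j ∧ (1/2 : ℝ) ≤ P n j').card = 1 := by
  have hcube := hP.1
  have hE : IsElemInterval 2 3 (2 - 0)
      {x : Fin 3 → ℝ | ∀ i, x i ∈ Set.Ico
        (((if i = j ∨ i = j' then 1 else 0 : ℕ) : ℝ) / (2:ℝ) ^ (if i = j ∨ i = j' then 1 else 0))
        ((((if i = j ∨ i = j' then 1 else 0 : ℕ) : ℝ) + 1) /
          (2:ℝ) ^ (if i = j ∨ i = j' then 1 else 0))} := by
    refine ⟨fun i => if i = j ∨ i = j' then 1 else 0,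
      fun i => if i = j ∨ i = j' then 1 else 0, ?_, ?_, by push_cast; rfl⟩
    · intro i; by_cases hij : i = j ∨ i = j' <;> simp [hij]
    · fin_cases j <;> fin_cases j' <;> simp_all [Fin.sum_univ_three] <;> decide
  have h := hP.2 _ hE
  rw [pow_zero] at h
  refine Eq.trans ?_ h
  congr 1
  ext n
  simp only [Finset.mem_filter, Finset.mem_univ, true_and, Set.mem_setOf_eq]
  constructor
  · intro hn i
    by_cases hij : i = j ∨ i = j'
    · simp only [if_pos hij]
      have hi : (1/2 : ℝ) ≤ P n i := by rcases hij with h1 | h1 <;> rw [h1]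
        <;> [exact hn.1; exact hn.2]
      constructor
      · calc ((1:ℕ):ℝ)/2^1 = 1/2 := by norm_num
          _ ≤ P n i := hi
      · calc P n i < 1 := (hcube n i).2
          _ = (((1:ℕ):ℝ)+1)/2^1 := by norm_num
    · simp only [if_neg hij]
      constructor
      · simpa using (hcube n i).1
      · simpa using (hcube n i).2
  · intro hn
    have h1 := hn j
    have h2 := hn j'
    simp only [if_pos (Or.inl rfl), eq_self_iff_true, or_true, if_true] at h1 h2
    norm_num at h1 h2
    exact ⟨h1.1, h2.1⟩

/-- In a `(0,2,3)`-net in base `2` whose fourth point lies in `[3/4,1)^3`,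
each of the other three points has exactly one coordinate in `[1/2,3/4)` and its other
two coordinates in `[0,1/2)`. -/
theorem stmt15 (P : Fin (2 ^ 2) → Fin 3 → ℝ) (hP : IsNet 2 3 2 0 P)
    (h4 : ∀ n : Fin (2 ^ 2), (n : ℕ) = 3 → ∀ j, P n j ∈ Set.Ico (3 / 4 : ℝ) 1) :
    ∀ n : Fin (2 ^ 2), (n : ℕ) < 3 →
      ∃ j, P n j ∈ Set.Ico (1 / 2 : ℝ) (3 / 4) ∧
        ∀ j', j' ≠ j → P n j' ∈ Set.Ico (0 : ℝ) (1 / 2) := by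
  have hcube := hP.1
  have hp3 := h4 3 (by decide)
  -- no point other than the fourth has a coordinate ≥ 3/4
  have hA : ∀ n : Fin (2 ^ 2), (n : ℕ) < 3 → ∀ j, P n j < 3 / 4 := by
    intro n hn j
    by_contra hc
    push_neg at hc
    have hcard := card_single P hP j 3 (by norm_num)
    obtain ⟨m, hm⟩ := Finset.card_eq_one.mp hcard
    have hmem : ∀ k, P k j ∈ Set.Ico (((3:ℕ):ℝ)/4) ((((3:ℕ):ℝ)+1)/4) → k = m := by
      intro k hk
      have hk2 : k ∈ Finset.univ.filter
          (fun n => P n j ∈ Set.Ico (((3:ℕ):ℝ)/4) ((((3:ℕ):ℝ)+1)/4)) :=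
        Finset.mem_filter.mpr ⟨Finset.mem_univ _, hk⟩
      rw [hm] at hk2
      simpa using hk2
    have e1 : n = m := hmem n ⟨by push_cast; linarith,
      by have := (hcube n j).2; push_cast; linarith⟩
    have e2 : (3 : Fin (2 ^ 2)) = m := hmem 3 ⟨by have := (hp3 j).1; push_cast; linarith,
      by have := (hp3 j).2; push_cast; linarith⟩
    have e3 : n = (3 : Fin (2 ^ 2)) := e1.trans e2.symm
    rw [e3] at hn
    exact absurd hn (by decide)
  -- no point other than the fourth has two coordinates ≥ 1/2
  have hB : ∀ n : Fin (2 ^ 2), (n : ℕ) < 3 → ∀ j j' : Fin 3, j ≠ j' →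
      ¬((1/2 : ℝ) ≤ P n j ∧ (1/2 : ℝ) ≤ P n j') := by
    intro n hn j j' hjj hc
    have hcard := card_pair P hP j j' hjj
    obtain ⟨m, hm⟩ := Finset.card_eq_one.mp hcard
    have hmem : ∀ k, (1/2 : ℝ) ≤ P k j ∧ (1/2 : ℝ) ≤ P k j' → k = m := by
      intro k hk
      have hk2 : k ∈ Finset.univ.filter
          (fun n => (1/2 : ℝ) ≤ P n j ∧ (1/2 : ℝ) ≤ P n j') :=
        Finset.mem_filter.mpr ⟨Finset.mem_univ _, hk⟩
      rw [hm] at hk2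
      simpa using hk2
    have e1 : n = m := hmem n hc
    have e2 : (3 : Fin (2 ^ 2)) = m := hmem 3
      ⟨by have := (hp3 j).1; linarith, by have := (hp3 j').1; linarith⟩
    have e3 : n = (3 : Fin (2 ^ 2)) := e1.trans e2.symm
    rw [e3] at hn
    exact absurd hn (by decide)
  -- for each coordinate, exactly one point with that coordinate in [1/2,3/4)
  have hC : ∀ j : Fin 3, ∃ n : Fin (2 ^ 2), (n : ℕ) < 3 ∧
      P n j ∈ Set.Ico (1/2 : ℝ) (3/4) ∧
      ∀ k, P k j ∈ Set.Ico (1/2 : ℝ) (3/4) → k = n := by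
    intro j
    have hcard := card_single P hP j 2 (by norm_num)
    obtain ⟨m, hm⟩ := Finset.card_eq_one.mp hcard
    have hmem : ∀ k, P k j ∈ Set.Ico (1/2 : ℝ) (3/4) → k = m := by
      intro k hk
      have hk2 : k ∈ Finset.univ.filter
          (fun n => P n j ∈ Set.Ico (((2:ℕ):ℝ)/4) ((((2:ℕ):ℝ)+1)/4)) :=
        Finset.mem_filter.mpr ⟨Finset.mem_univ _,
          ⟨by push_cast; linarith [hk.1], by push_cast; linarith [hk.2]⟩⟩
      rw [hm] at hk2
      simpa using hk2
    have hmmem : m ∈ Finset.univ.filter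
        (fun n => P n j ∈ Set.Ico (((2:ℕ):ℝ)/4) ((((2:ℕ):ℝ)+1)/4)) := by
      rw [hm]; simp
    have hmj : P m j ∈ Set.Ico (1/2 : ℝ) (3/4) := by
      have := (Finset.mem_filter.mp hmmem).2
      exact ⟨by push_cast at this; linarith [this.1], by push_cast at this; linarith [this.2]⟩
    have hm3 : m ≠ (3 : Fin (2 ^ 2)) := by
      intro e
      rw [e] at hmj
      have := (hp3 j).1
      have := hmj.2
      linarith
    have hmlt : (m : ℕ) < 3 := by
      have h1 : (m : ℕ) < 4 := m.isLt
      have h2 : (m : ℕ) ≠ 3 := by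
        intro e
        exact hm3 (Fin.ext (by simpa using e))
      omega
    exact ⟨m, hmlt, hmj, hmem⟩
  obtain ⟨n0, hn0lt, hn0, hu0⟩ := hC 0
  obtain ⟨n1, hn1lt, hn1, hu1⟩ := hC 1
  obtain ⟨n2, hn2lt, hn2, hu2⟩ := hC 2
  have d01 : n0 ≠ n1 := by
    intro e
    exact hB n0 hn0lt 0 1 (by decide) ⟨hn0.1, by rw [e]; exact hn1.1⟩
  have d02 : n0 ≠ n2 := by
    intro e
    exact hB n0 hn0lt 0 2 (by decide) ⟨hn0.1, by rw [e]; exact hn2.1⟩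
  have d12 : n1 ≠ n2 := by
    intro e
    exact hB n1 hn1lt 1 2 (by decide) ⟨hn1.1, by rw [e]; exact hn2.1⟩
  have final : ∀ (m : Fin (2 ^ 2)) (j : Fin 3), (m : ℕ) < 3 →
      P m j ∈ Set.Ico (1/2 : ℝ) (3/4) →
      ∃ j0, P m j0 ∈ Set.Ico (1/2 : ℝ) (3/4) ∧
        ∀ j', j' ≠ j0 → P m j' ∈ Set.Ico (0 : ℝ) (1/2) := by
    intro m j hm hmj
    refine ⟨j, hmj, fun j' hj' => ⟨(hcube m j').1, ?_⟩⟩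
    by_contra hc
    push_neg at hc
    exact hB m hm j j' (Ne.symm hj') ⟨hmj.1, hc⟩
  intro n hn
  have hcase : n = n0 ∨ n = n1 ∨ n = n2 := by
    by_contra hcon
    push_neg at hcon
    obtain ⟨c0, c1, c2⟩ := hcon
    have v0 : (n : ℕ) ≠ (n0 : ℕ) := fun h => c0 (Fin.ext h)
    have v1 : (n : ℕ) ≠ (n1 : ℕ) := fun h => c1 (Fin.ext h)
    have v2 : (n : ℕ) ≠ (n2 : ℕ) := fun h => c2 (Fin.ext h)
    have w01 : (n0 : ℕ) ≠ (n1 : ℕ) := fun h => d01 (Fin.ext h)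
    have w02 : (n0 : ℕ) ≠ (n2 : ℕ) := fun h => d02 (Fin.ext h)
    have w12 : (n1 : ℕ) ≠ (n2 : ℕ) := fun h => d12 (Fin.ext h)
    omega
  rcases hcase with e | e | e
  · subst e; exact final n 0 hn hn0
  · subst e; exact final n 1 hn hn1
  · subst e; exact final n 2 hn hn2


end LHSPaper
end

section
/- Let Y = (Y_1, Y_2, Y_3, Y_4) be an abstract scrambled (0,2,3)-net in base 2, let ε ∈ (0, 1/4), and set D = [0, 1/2 + ε)^3 \ [0, 1/2)^3. Then P(Y_1 ∈ D, Y_2 ∈ D, Y_3 ∈ D) = ε^3, while P(Y_i ∈ D) = (1/2 + ε)^3 − (1/2)^3 for each i ∈ {1, 2, 3}. -/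
open MeasureTheory ProbabilityTheory Filter
open scoped ENNReal Classical

namespace LHSPaper

/-! ### Auxiliary material for `stmt16` -/

/-- quarter cube -/
def cubeOf (k : Fin 3 → Fin 4) : Set (Fin 3 → ℝ) :=
  {x | ∀ j, x j ∈ Set.Ico ((k j : ℝ) / 4) (((k j : ℝ) + 1) / 4)}

lemma quarter_exists {x : ℝ} (h0 : 0 ≤ x) (h1 : x < 1) :
    ∃ a : Fin 4, x ∈ Set.Ico ((a : ℝ) / 4) (((a : ℝ) + 1) / 4) := by
  have h4 : (0:ℝ) ≤ 4 * x := by linarith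
  have hlt : ⌊4 * x⌋₊ < 4 := by
    have : (4:ℝ) * x < 4 := by linarith
    exact Nat.floor_lt h4 |>.2 (by exact_mod_cast this)
  refine ⟨⟨⌊4 * x⌋₊, hlt⟩, ?_, ?_⟩
  · simp only [Fin.val_mk]
    have := Nat.floor_le h4
    linarith
  · simp only [Fin.val_mk]
    have := Nat.lt_floor_add_one (4 * x)
    linarith

lemma quarter_unique {a b : Fin 4} {x : ℝ}
    (ha : x ∈ Set.Ico ((a : ℝ) / 4) (((a : ℝ) + 1) / 4))
    (hb : x ∈ Set.Ico ((b : ℝ) / 4) (((b : ℝ) + 1) / 4)) : a = b := by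
  by_contra hne
  rcases Nat.lt_or_ge (a : ℕ) (b : ℕ) with h | h
  · have : ((a : ℕ) : ℝ) + 1 ≤ ((b : ℕ) : ℝ) := by exact_mod_cast h
    have := ha.2; have := hb.1; simp only [Set.mem_Ico] at *; linarith
  · have hlt : (b : ℕ) < (a : ℕ) := by
      rcases Nat.lt_or_ge (b : ℕ) (a : ℕ) with h' | h'
      · exact h'
      · exact absurd (Fin.ext (le_antisymm h' h)) hne
    have : ((b : ℕ) : ℝ) + 1 ≤ ((a : ℕ) : ℝ) := by exact_mod_cast hlt
    have := ha.1; have := hb.2; simp only [Set.mem_Ico] at *; linarith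

lemma mem_cubeOf_unique {x : Fin 3 → ℝ} {k k' : Fin 3 → Fin 4}
    (h : x ∈ cubeOf k) (h' : x ∈ cubeOf k') : k = k' :=
  funext fun j => quarter_unique (h j) (h' j)

lemma cubeOf_disjoint {k k' : Fin 3 → Fin 4} (h : k ≠ k') : cubeOf k ∩ cubeOf k' = ∅ := by
  ext x; simp only [Set.mem_inter_iff, Set.mem_empty_iff_false, iff_false]
  rintro ⟨h1, h2⟩; exact h (mem_cubeOf_unique h1 h2)

lemma mem_cubeOf_of_unit {x : Fin 3 → ℝ} (h : ∀ j, x j ∈ Set.Ico (0:ℝ) 1) :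
    ∃ k, x ∈ cubeOf k := by
  have h' : ∀ j, ∃ a : Fin 4, x j ∈ Set.Ico ((a : ℝ) / 4) (((a : ℝ) + 1) / 4) :=
    fun j => quarter_exists (h j).1 (h j).2
  choose k hk using h'
  exact ⟨k, hk⟩

lemma cubeOf_isBasicCube (k : Fin 3 → Fin 4) : IsBasicCube 2 3 2 0 (cubeOf k) := by
  refine ⟨fun j => (k j : ℕ), fun j => by norm_num [(k j).isLt], ?_⟩
  unfold cubeOf
  norm_num

lemma quarter_subset_upper_half {a : Fin 4} (ha : 2 ≤ (a : ℕ)) {x : ℝ}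
    (hx : x ∈ Set.Ico ((a : ℝ) / 4) (((a : ℝ) + 1) / 4)) : x ∈ Set.Ico (1/2 : ℝ) 1 := by
  have h3 : (a : ℕ) ≤ 3 := by omega
  have h3' : ((a : ℕ) : ℝ) ≤ 3 := by exact_mod_cast h3
  have h2' : (2 : ℝ) ≤ ((a : ℕ) : ℝ) := by exact_mod_cast ha
  have := hx.1; have := hx.2
  constructor <;> simp only [Set.mem_Ico] at * <;> linarith

section NetLemmas

variable {P : Fin (2 ^ 2) → Fin 3 → ℝ}

lemma net_col_inj (hP : IsNet 2 3 2 0 P) (c : Fin 3) {n m : Fin (2 ^ 2)} (hnm : n ≠ m)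
    {a : Fin 4} (hn : P n c ∈ Set.Ico ((a : ℝ) / 4) (((a : ℝ) + 1) / 4))
    (hm : P m c ∈ Set.Ico ((a : ℝ) / 4) (((a : ℝ) + 1) / 4)) : False := by
  classical
  set ℓf : Fin 3 → ℕ := fun i => if i = c then 2 else 0 with hℓf
  set af : Fin 3 → ℕ := fun i => if i = c then (a : ℕ) else 0 with haf
  have hE : IsElemInterval 2 3 (2 - 0)
      {x : Fin 3 → ℝ | ∀ i, x i ∈
        Set.Ico ((af i : ℝ) / (2:ℕ) ^ ℓf i) (((af i : ℝ) + 1) / (2:ℕ) ^ ℓf i)} := by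
    refine ⟨ℓf, af, fun i => ?_, ?_, rfl⟩
    · simp only [hℓf, haf]
      split
      · simpa using a.isLt
      · norm_num
    · simp [hℓf, Finset.sum_ite_eq']
  have hcard := hP.2 _ hE
  have hmemE : ∀ p : Fin (2 ^ 2), P p c ∈ Set.Ico ((a : ℝ) / 4) (((a : ℝ) + 1) / 4) →
      (P p) ∈ {x : Fin 3 → ℝ | ∀ i, x i ∈
        Set.Ico ((af i : ℝ) / (2:ℕ) ^ ℓf i) (((af i : ℝ) + 1) / (2:ℕ) ^ ℓf i)} := by
    intro p hp i
    by_cases hic : i = c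
    · subst hic
      simp only [hℓf, haf, if_pos rfl]
      norm_num
      convert hp using 2 <;> norm_num
    · simp only [hℓf, haf, if_neg hic]
      have := hP.1 p i
      norm_num
      simpa using this
  have h2 : ({n, m} : Finset (Fin (2 ^ 2))).card = 2 := by
    rw [Finset.card_insert_of_notMem (by simpa using hnm), Finset.card_singleton]
  have hle : (2:ℕ) ≤ 2 ^ 0 := by
    rw [← hcard]
    refine le_trans (le_of_eq h2.symm) (Finset.card_le_card ?_)
    intro p hp
    simp only [Finset.mem_insert, Finset.mem_singleton] at hp
    simp only [Finset.mem_filter]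
    rcases hp with rfl | rfl <;>
      exact ⟨Finset.mem_univ _, by first | exact hmemE _ hn | exact hmemE _ hm⟩
  norm_num at hle

lemma net_pair_inj (hP : IsNet 2 3 2 0 P) {c c' : Fin 3} (hcc' : c ≠ c')
    {n m : Fin (2 ^ 2)} (hnm : n ≠ m)
    (h1 : P n c ∈ Set.Ico (1/2 : ℝ) 1) (h2 : P n c' ∈ Set.Ico (1/2 : ℝ) 1)
    (h3 : P m c ∈ Set.Ico (1/2 : ℝ) 1) (h4 : P m c' ∈ Set.Ico (1/2 : ℝ) 1) : False := by
  classical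
  set ℓf : Fin 3 → ℕ := fun i => if i = c ∨ i = c' then 1 else 0 with hℓf
  set af : Fin 3 → ℕ := fun i => if i = c ∨ i = c' then 1 else 0 with haf
  have hE : IsElemInterval 2 3 (2 - 0)
      {x : Fin 3 → ℝ | ∀ i, x i ∈
        Set.Ico ((af i : ℝ) / (2:ℕ) ^ ℓf i) (((af i : ℝ) + 1) / (2:ℕ) ^ ℓf i)} := by
    refine ⟨ℓf, af, fun i => ?_, ?_, rfl⟩
    · simp only [hℓf, haf]; split <;> norm_num
    · simp only [hℓf]
      rw [Fin.sum_univ_three]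
      fin_cases c <;> fin_cases c' <;> simp_all <;> omega
  have hcard := hP.2 _ hE
  have hmemE : ∀ p : Fin (2 ^ 2), P p c ∈ Set.Ico (1/2 : ℝ) 1 → P p c' ∈ Set.Ico (1/2 : ℝ) 1 →
      (P p) ∈ {x : Fin 3 → ℝ | ∀ i, x i ∈
        Set.Ico ((af i : ℝ) / (2:ℕ) ^ ℓf i) (((af i : ℝ) + 1) / (2:ℕ) ^ ℓf i)} := by
    intro p hp hp' i
    by_cases hic : i = c ∨ i = c'
    · have hx : P p i ∈ Set.Ico (1/2 : ℝ) 1 := by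
        rcases hic with rfl | rfl <;> assumption
      simp only [hℓf, haf, if_pos hic]
      norm_num
      simpa using hx
    · simp only [hℓf, haf, if_neg hic]
      have := hP.1 p i
      norm_num
      simpa using this
  have h2c : ({n, m} : Finset (Fin (2 ^ 2))).card = 2 := by
    rw [Finset.card_insert_of_notMem (by simpa using hnm), Finset.card_singleton]
  have hle : (2:ℕ) ≤ 2 ^ 0 := by
    rw [← hcard]
    refine le_trans (le_of_eq h2c.symm) (Finset.card_le_card ?_)
    intro p hp
    simp only [Finset.mem_insert, Finset.mem_singleton] at hp
    simp only [Finset.mem_filter]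
    rcases hp with rfl | rfl <;>
      exact ⟨Finset.mem_univ _, by first | exact hmemE _ h1 h2 | exact hmemE _ h3 h4⟩
  norm_num at hle

end NetLemmas

def Compat (K : Fin (2 ^ 2) → Fin 3 → Fin 4) : Prop :=
  (∀ c, K 3 c = 3) ∧
  (∀ i : Fin (2 ^ 2), (i : ℕ) < 3 → ∀ c, (K i c : ℕ) ≤ 2) ∧
  (∀ i : Fin (2 ^ 2), (i : ℕ) < 3 → ∀ c c', K i c = 2 → K i c' = 2 → c = c') ∧
  (∀ i : Fin (2 ^ 2), (i : ℕ) < 3 → ∃ c, K i c = 2) ∧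
  (∀ c, ∀ i i' : Fin (2 ^ 2), (i : ℕ) < 3 → (i' : ℕ) < 3 → i ≠ i' → K i c ≠ K i' c)

lemma finN_val_three : ((3 : Fin (2 ^ 2)) : ℕ) = 3 := rfl

lemma fin4_lt3_or_eq (i : Fin (2 ^ 2)) : (i : ℕ) < 3 ∨ i = 3 := by
  have h := i.isLt
  norm_num at h
  rcases Nat.lt_or_ge (i : ℕ) 3 with h' | h'
  · exact Or.inl h'
  · right
    apply Fin.ext
    rw [finN_val_three]
    omega

lemma fin4_eq_two {a : Fin 4} (h : (a : ℕ) = 2) : a = 2 := Fin.ext (h.trans rfl)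

lemma fin3_third : ∀ c c' c₁ c₂ : Fin 3,
    c ≠ c' → c₁ ≠ c → c₁ ≠ c' → c₂ ≠ c → c₂ ≠ c' → c₁ = c₂ := by decide

lemma finN_exists_pair : ∀ i : Fin (2 ^ 2), (i : ℕ) < 3 →
    ∃ i₁ i₂ : Fin (2 ^ 2), (i₁ : ℕ) < 3 ∧ (i₂ : ℕ) < 3 ∧ i₁ ≠ i₂ ∧ i₁ ≠ i ∧ i₂ ≠ i := by decide

lemma fin4_eq_three {a : Fin 4} (h : (a : ℕ) = 3) : a = 3 := Fin.ext (h.trans rfl)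

section Combinatorics

variable {P : Fin (2 ^ 2) → Fin 3 → ℝ}

lemma exists_quarters (hP : IsNet 2 3 2 0 P) :
    ∃ Q : Fin (2 ^ 2) → Fin 3 → Fin 4,
      ∀ n c, P n c ∈ Set.Ico ((Q n c : ℝ) / 4) (((Q n c : ℝ) + 1) / 4) := by
  have h : ∀ n c, ∃ a : Fin 4, P n c ∈ Set.Ico ((a : ℝ) / 4) (((a : ℝ) + 1) / 4) :=
    fun n c => quarter_exists ((hP.1 n) c).1 ((hP.1 n) c).2
  choose Q hQ using h
  exact ⟨Q, hQ⟩

/-- Assembling a compatible configuration from a quarter-index function. -/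
lemma compat_of_Q {Q : Fin (2 ^ 2) → Fin 3 → Fin 4}
    (hQ : ∀ n c, P n c ∈ Set.Ico ((Q n c : ℝ) / 4) (((Q n c : ℝ) + 1) / 4))
    (hub : ∀ i : Fin (2 ^ 2), (i : ℕ) < 3 → ∀ c, (Q i c : ℕ) ≤ 2)
    (huni : ∀ i : Fin (2 ^ 2), (i : ℕ) < 3 → ∀ c c', Q i c = 2 → Q i c' = 2 → c = c')
    (hex : ∀ i : Fin (2 ^ 2), (i : ℕ) < 3 → ∃ c, Q i c = 2)
    (hinj : ∀ (c : Fin 3) (n m : Fin (2 ^ 2)), n ≠ m → Q n c = Q m c → False) :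
    ∃ K, Compat K ∧ ∀ i : Fin (2 ^ 2), (i : ℕ) < 3 → P i ∈ cubeOf (K i) := by
  have h3not : ¬ (((3 : Fin (2 ^ 2)) : ℕ) < 3) := by rw [finN_val_three]; omega
  refine ⟨fun i c => if (i : ℕ) < 3 then Q i c else 3,
    ⟨fun c => ?_, fun i hi c => ?_, fun i hi c c' => ?_, fun i hi => ?_,
      fun c i i' hi hi' hii' => ?_⟩, fun i hi => ?_⟩
  · simp only [if_neg h3not]
  · simp only [if_pos hi]; exact hub i hi c
  · simp only [if_pos hi]; exact huni i hi c c'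
  · simp only [if_pos hi]; exact hex i hi
  · simp only [if_pos hi, if_pos hi']; exact fun he => hinj c i i' hii' he
  · intro j
    simp only [if_pos hi]
    exact hQ i j

lemma exists_compat_of_mem_D (hP : IsNet 2 3 2 0 P) {ε : ℝ} (hε : ε ∈ Set.Ioo (0 : ℝ) (1 / 4))
    (hmem : ∀ i : Fin (2 ^ 2), (i : ℕ) < 3 →
      P i ∈ anchoredBox (fun _ => 1 / 2 + ε) \ anchoredBox (fun _ => 1 / 2)) :
    ∃ K, Compat K ∧ ∀ i : Fin (2 ^ 2), (i : ℕ) < 3 → P i ∈ cubeOf (K i) := by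
  obtain ⟨Q, hQ⟩ := exists_quarters hP
  have hinj : ∀ (c : Fin 3) (n m : Fin (2 ^ 2)), n ≠ m → Q n c = Q m c → False := by
    intro c n m hnm he
    exact net_col_inj hP c hnm (hQ n c) (by rw [he] at *; exact hQ m c)
  have hub : ∀ i : Fin (2 ^ 2), (i : ℕ) < 3 → ∀ c, (Q i c : ℕ) ≤ 2 := by
    intro i hi c
    by_contra h
    have hlt := (Q i c).isLt
    have h3 : ((Q i c : ℕ) : ℝ) = 3 := by exact_mod_cast (by omega : (Q i c : ℕ) = 3)
    have hup := (hQ i c).1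
    rw [h3] at hup
    have hDm := ((hmem i hi).1 c).2
    have hε1 := hε.2
    norm_num at *
    linarith
  have hex : ∀ i : Fin (2 ^ 2), (i : ℕ) < 3 → ∃ c, Q i c = 2 := by
    intro i hi
    have hnot := (hmem i hi).2
    have hexc : ∃ c, ¬ (P i c ∈ Set.Ico (0 : ℝ) (1 / 2)) := by
      by_contra hall
      push_neg at hall
      exact hnot (fun c => hall c)
    obtain ⟨c, hc⟩ := hexc
    have h0 : 0 ≤ P i c := ((hP.1 i) c).1
    have hge : (1 / 2 : ℝ) ≤ P i c := by
      by_contra h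
      push_neg at h
      exact hc ⟨h0, h⟩
    refine ⟨c, fin4_eq_two ?_⟩
    have hle2 := hub i hi c
    have h2 : 2 ≤ (Q i c : ℕ) := by
      by_contra h
      push_neg at h
      have hcast : ((Q i c : ℕ) : ℝ) + 1 ≤ 2 := by exact_mod_cast h
      have := (hQ i c).2
      linarith
    omega
  have huni : ∀ i : Fin (2 ^ 2), (i : ℕ) < 3 → ∀ c c', Q i c = 2 → Q i c' = 2 → c = c' := by
    intro i hi c c' hc hc'
    by_contra hcc'
    obtain ⟨i₁, i₂, h₁, h₂, h12, h1i, h2i⟩ := finN_exists_pair i hi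
    obtain ⟨c₁, hc₁⟩ := hex i₁ h₁
    obtain ⟨c₂, hc₂⟩ := hex i₂ h₂
    have hc₁c : c₁ ≠ c := by
      intro he
      exact hinj c i₁ i h1i (by rw [← he, hc₁, he, hc])
    have hc₁c' : c₁ ≠ c' := by
      intro he
      exact hinj c' i₁ i h1i (by rw [← he, hc₁, he, hc'])
    have hc₂c : c₂ ≠ c := by
      intro he
      exact hinj c i₂ i h2i (by rw [← he, hc₂, he, hc])
    have hc₂c' : c₂ ≠ c' := by
      intro he
      exact hinj c' i₂ i h2i (by rw [← he, hc₂, he, hc'])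
    have hcc : c₁ = c₂ := fin3_third c c' c₁ c₂ hcc' hc₁c hc₁c' hc₂c hc₂c'
    exact hinj c₁ i₁ i₂ h12 (by rw [hc₁, hcc] at *; rw [hc₂])
  exact compat_of_Q hQ hub huni hex hinj

lemma mem_C333_of_compat (hP : IsNet 2 3 2 0 P) {K : Fin (2 ^ 2) → Fin 3 → Fin 4}
    (hK : Compat K)
    (hmem : ∀ i : Fin (2 ^ 2), (i : ℕ) < 3 → P i ∈ cubeOf (K i)) :
    P 3 ∈ cubeOf (fun _ => 3) := by
  obtain ⟨Q, hQ⟩ := exists_quarters hP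
  have hinj : ∀ (c : Fin 3) (n m : Fin (2 ^ 2)), n ≠ m → Q n c = Q m c → False := by
    intro c n m hnm he
    exact net_col_inj hP c hnm (hQ n c) (by rw [he] at *; exact hQ m c)
  have hQK : ∀ i : Fin (2 ^ 2), (i : ℕ) < 3 → ∀ c, Q i c = K i c :=
    fun i hi c => quarter_unique (hQ i c) (hmem i hi c)
  intro c
  have h33 : Q 3 c = 3 := by
    by_contra h
    have hle : ∀ n : Fin (2 ^ 2), (Q n c : ℕ) ≤ 2 := by
      intro n
      rcases fin4_lt3_or_eq n with hn | rfl
      · rw [hQK n hn c]; exact hK.2.1 n hn c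
      · have hv : (Q 3 c : ℕ) ≠ 3 := fun hv => h (fin4_eq_three hv)
        have := (Q 3 c).isLt
        omega
    set f : Fin (2 ^ 2) → Fin 3 := fun n => ⟨(Q n c : ℕ), by have := hle n; omega⟩ with hf
    have hfinj : Function.Injective f := by
      intro n m he
      by_contra hnm
      have hvals := congrArg Fin.val he
      simp only [hf] at hvals
      exact hinj c n m hnm (Fin.ext hvals)
    have hcard := Fintype.card_le_of_injective f hfinj
    norm_num at hcard
  have := hQ 3 c
  rw [h33] at this
  exact this

lemma exists_compat_of_C333 (hP : IsNet 2 3 2 0 P)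
    (h3 : P 3 ∈ cubeOf (fun _ => 3)) :
    ∃ K, Compat K ∧ ∀ i : Fin (2 ^ 2), (i : ℕ) < 3 → P i ∈ cubeOf (K i) := by
  obtain ⟨Q, hQ⟩ := exists_quarters hP
  have hinj : ∀ (c : Fin 3) (n m : Fin (2 ^ 2)), n ≠ m → Q n c = Q m c → False := by
    intro c n m hnm he
    exact net_col_inj hP c hnm (hQ n c) (by rw [he] at *; exact hQ m c)
  have hQ3 : ∀ c, Q 3 c = 3 := fun c => quarter_unique (hQ 3 c) (h3 c)
  have hne3 : ∀ i : Fin (2 ^ 2), (i : ℕ) < 3 → i ≠ 3 := by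
    intro i hi he
    rw [he, finN_val_three] at hi
    omega
  have hub : ∀ i : Fin (2 ^ 2), (i : ℕ) < 3 → ∀ c, (Q i c : ℕ) ≤ 2 := by
    intro i hi c
    have hne : Q i c ≠ Q 3 c := fun he => hinj c i 3 (hne3 i hi) he
    rw [hQ3 c] at hne
    have hv : (Q i c : ℕ) ≠ 3 := fun hv => hne (fin4_eq_three hv)
    have := (Q i c).isLt
    omega
  have huni : ∀ i : Fin (2 ^ 2), (i : ℕ) < 3 → ∀ c c', Q i c = 2 → Q i c' = 2 → c = c' := by
    intro i hi c c' hc hc'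
    by_contra hcc'
    refine net_pair_inj hP hcc' (hne3 i hi)
      (quarter_subset_upper_half (by rw [hc]; decide) (hQ i c))
      (quarter_subset_upper_half (by rw [hc']; decide) (hQ i c'))
      (quarter_subset_upper_half (by rw [hQ3 c]; decide) (hQ 3 c))
      (quarter_subset_upper_half (by rw [hQ3 c']; decide) (hQ 3 c'))
  have hexc : ∀ c, ∃ i : Fin (2 ^ 2), (i : ℕ) < 3 ∧ Q i c = 2 := by
    intro c
    by_contra h
    push_neg at h
    have hv : ∀ n : Fin (2 ^ 2), (Q n c : ℕ) = 0 ∨ (Q n c : ℕ) = 1 ∨ (Q n c : ℕ) = 3 := by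
      intro n
      rcases fin4_lt3_or_eq n with hn | rfl
      · have h1 := hub n hn c
        have hne2 : (Q n c : ℕ) ≠ 2 := fun hv => h n hn (fin4_eq_two hv)
        omega
      · rw [hQ3 c]; right; right; rfl
    have hQinj : Function.Injective (fun n : Fin (2 ^ 2) => Q n c) := by
      intro n m he
      by_contra hnm
      exact hinj c n m hnm he
    have himg : (Finset.univ.image (fun n : Fin (2 ^ 2) => Q n c)) ⊆
        ({0, 1, 3} : Finset (Fin 4)) := by
      intro a ha
      simp only [Finset.mem_image, Finset.mem_univ, true_and] at ha
      obtain ⟨n, rfl⟩ := ha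
      rcases hv n with h1 | h1 | h1 <;>
        simp only [Finset.mem_insert, Finset.mem_singleton] <;>
          [exact Or.inl (Fin.ext h1); exact Or.inr (Or.inl (Fin.ext h1));
            exact Or.inr (Or.inr (Fin.ext h1))]
    have hc1 := Finset.card_le_card himg
    rw [Finset.card_image_of_injective _ hQinj] at hc1
    simp at hc1
  choose ρ hρ1 hρ2 using hexc
  have hρinj : ∀ c c', ρ c = ρ c' → c = c' := by
    intro c c' he
    exact huni (ρ c) (hρ1 c) c c' (hρ2 c) (by rw [he]; exact hρ2 c')
  have hexr : ∀ i : Fin (2 ^ 2), (i : ℕ) < 3 → ∃ c, Q i c = 2 := by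
    intro i hi
    set ρ' : Fin 3 → Fin 3 := fun c => ⟨(ρ c : ℕ), hρ1 c⟩ with hρ'
    have hinj' : Function.Injective ρ' := by
      intro c c' he
      have hv := congrArg Fin.val he
      simp only [hρ'] at hv
      exact hρinj c c' (Fin.ext hv)
    have hsurj := Finite.injective_iff_surjective.1 hinj'
    obtain ⟨c, hc⟩ := hsurj ⟨(i : ℕ), hi⟩
    have hv := congrArg Fin.val hc
    simp only [hρ'] at hv
    refine ⟨c, ?_⟩
    have hci : ρ c = i := Fin.ext hv
    rw [← hci]
    exact hρ2 c
  exact compat_of_Q hQ hub huni hexr hinj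

end Combinatorics

section MeasureHelpers

variable {Ω : Type*} [MeasurableSpace Ω] {μ : Measure Ω}

lemma nullMeasurableSet_of_add_le_one [IsProbabilityMeasure μ] {s : Set Ω}
    (h : μ s + μ sᶜ ≤ 1) : NullMeasurableSet s μ := by
  set t := toMeasurable μ s with ht
  have hst : s ⊆ t := subset_toMeasurable μ s
  set v := toMeasurable μ sᶜ with hv
  have hvm : MeasurableSet v := measurableSet_toMeasurable μ sᶜ
  have hus : vᶜ ⊆ s := by
    have hsv := subset_toMeasurable μ sᶜ
    intro x hx
    by_contra hxs
    exact hx (hsv hxs)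
  have hμt : μ t = μ s := measure_toMeasurable s
  have hμv : μ v = μ sᶜ := measure_toMeasurable sᶜ
  have hμu : μ vᶜ = 1 - μ v := by
    rw [measure_compl hvm (measure_ne_top μ v)]
    simp
  have hle : μ t ≤ μ vᶜ := by
    rw [hμt, hμu, hμv]
    exact ENNReal.le_sub_of_add_le_right (measure_ne_top μ sᶜ) h
  have hsub : vᶜ ⊆ t := hus.trans hst
  have hdiff : μ (t \ vᶜ) = 0 := by
    rw [measure_diff hsub hvm.compl.nullMeasurableSet (measure_ne_top μ _)]
    exact tsub_eq_zero_of_le hle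
  exact (measurableSet_toMeasurable μ s).nullMeasurableSet.congr
    (MeasureTheory.ae_eq_set.2
      ⟨measure_mono_null (Set.diff_subset_diff_right hus) hdiff,
        by rw [Set.diff_eq_empty.2 hst]; exact measure_empty⟩)

lemma measure_eq_sum_partition {ι : Type*} (μ : Measure Ω) (S : Finset ι) (E : ι → Set Ω) :
    (∀ i ∈ S, NullMeasurableSet (E i) μ) →
    (∀ i ∈ S, ∀ j ∈ S, i ≠ j → E i ∩ E j = ∅) →
    ∀ X : Set Ω, X ⊆ (⋃ i ∈ S, E i) → μ X = ∑ i ∈ S, μ (X ∩ E i) := by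
  classical
  induction S using Finset.induction_on with
  | empty =>
    intro _ _ X hX
    simp only [Finset.notMem_empty, Set.iUnion_of_empty, Set.iUnion_empty] at hX
    simp [Set.subset_empty_iff.1 hX]
  | @insert a S ha ih =>
    intro hnm hdis X hX
    have h1 := measure_inter_add_diff₀ (μ := μ) X (hnm a (Finset.mem_insert_self a S))
    have h2 : X \ E a ⊆ ⋃ i ∈ S, E i := by
      intro x hx
      have hxU := hX hx.1
      simp only [Set.mem_iUnion, exists_prop] at hxU ⊢
      obtain ⟨i, hi, hxi⟩ := hxU
      rcases Finset.mem_insert.1 hi with rfl | hiS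
      · exact absurd hxi hx.2
      · exact ⟨i, hiS, hxi⟩
    have h3 := ih (fun i hi => hnm i (Finset.mem_insert_of_mem hi))
      (fun i hi j hj hij =>
        hdis i (Finset.mem_insert_of_mem hi) j (Finset.mem_insert_of_mem hj) hij)
      (X \ E a) h2
    have h4 : ∀ i ∈ S, (X \ E a) ∩ E i = X ∩ E i := by
      intro i hi
      have hdisj := hdis a (Finset.mem_insert_self a S) i (Finset.mem_insert_of_mem hi)
        (by rintro rfl; exact ha hi)
      ext x
      constructor
      · rintro ⟨⟨hx, _⟩, hxi⟩; exact ⟨hx, hxi⟩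
      · rintro ⟨hx, hxi⟩
        refine ⟨⟨hx, fun hxa => ?_⟩, hxi⟩
        have hmem : x ∈ E a ∩ E i := ⟨hxa, hxi⟩
        rw [hdisj] at hmem
        exact hmem
    rw [Finset.sum_insert ha, ← h1, h3]
    congr 1
    exact Finset.sum_congr rfl (fun i hi => by rw [h4 i hi])

lemma cond_eval {s t : Set Ω} (hs : NullMeasurableSet s μ) (h0 : μ s ≠ 0) (h1 : μ s ≠ ⊤)
    {v : ℝ≥0∞} (h : (μ[|s]) t = v) : μ (t ∩ s) = v * μ s := by
  unfold ProbabilityTheory.cond at h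
  rw [Measure.smul_apply, smul_eq_mul, Measure.restrict_apply₀' hs] at h
  calc μ (t ∩ s) = (μ s * (μ s)⁻¹) * μ (t ∩ s) := by
        rw [ENNReal.mul_inv_cancel h0 h1, one_mul]
  _ = μ s * ((μ s)⁻¹ * μ (t ∩ s)) := by ring
  _ = μ s * v := by rw [h]
  _ = v * μ s := mul_comm _ _

end MeasureHelpers

section Volumes

lemma cubeOf_eq_pi (k : Fin 3 → Fin 4) :
    cubeOf k = Set.pi Set.univ (fun j => Set.Ico ((k j : ℝ) / 4) (((k j : ℝ) + 1) / 4)) := by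
  ext x
  simp [cubeOf, Set.mem_pi]

lemma measurableSet_cubeOf (k : Fin 3 → Fin 4) : MeasurableSet (cubeOf k) := by
  rw [cubeOf_eq_pi]
  exact MeasurableSet.univ_pi (fun j => measurableSet_Ico)

lemma volume_cubeOf (k : Fin 3 → Fin 4) : volume (cubeOf k) = ENNReal.ofReal (1 / 64) := by
  rw [cubeOf_eq_pi, volume_pi_pi]
  have h : ∀ j : Fin 3, volume (Set.Ico ((k j : ℝ) / 4) (((k j : ℝ) + 1) / 4))
      = ENNReal.ofReal (1 / 4) := by
    intro j
    rw [Real.volume_Ico]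
    congr 1
    ring
  simp only [h]
  rw [Finset.prod_const, Finset.card_univ, Fintype.card_fin,
    ← ENNReal.ofReal_pow (by norm_num : (0:ℝ) ≤ 1 / 4)]
  norm_num

lemma anchoredBox_eq_pi {d : ℕ} (a : Fin d → ℝ) :
    anchoredBox a = Set.pi Set.univ (fun i => Set.Ico 0 (a i)) := by
  ext x
  simp [anchoredBox, Set.mem_pi]

lemma measurableSet_anchoredBox {d : ℕ} (a : Fin d → ℝ) : MeasurableSet (anchoredBox a) := by
  rw [anchoredBox_eq_pi]
  exact MeasurableSet.univ_pi (fun i => measurableSet_Ico)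

lemma volume_anchoredBox_const {r : ℝ} (hr : 0 ≤ r) :
    volume (anchoredBox (fun _ : Fin 3 => r)) = ENNReal.ofReal (r ^ 3) := by
  rw [anchoredBox_eq_pi, volume_pi_pi]
  simp only [Real.volume_Ico, sub_zero]
  rw [Finset.prod_const, Finset.card_univ, Fintype.card_fin,
    ← ENNReal.ofReal_pow hr]

lemma volume_D {ε : ℝ} (hε : ε ∈ Set.Ioo (0:ℝ) (1/4)) :
    volume ((anchoredBox (fun _ : Fin 3 => 1/2 + ε)) \ (anchoredBox (fun _ => 1/2)))
      = ENNReal.ofReal ((1/2 + ε) ^ 3 - (1/2) ^ 3) := by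
  have hsub : anchoredBox (fun _ : Fin 3 => (1/2:ℝ)) ⊆ anchoredBox (fun _ => 1/2 + ε) := by
    intro x hx i
    exact ⟨(hx i).1, lt_of_lt_of_le (hx i).2 (by linarith [hε.1])⟩
  rw [measure_diff hsub (measurableSet_anchoredBox _).nullMeasurableSet
    (by rw [volume_anchoredBox_const (by norm_num : (0:ℝ) ≤ 1/2)]; exact ENNReal.ofReal_ne_top),
    volume_anchoredBox_const (by linarith [hε.1] : (0:ℝ) ≤ 1/2 + ε),
    volume_anchoredBox_const (by norm_num : (0:ℝ) ≤ 1/2),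
    ENNReal.ofReal_sub _ (by positivity)]

lemma D_inter_cubeOf {ε : ℝ} (hε : ε ∈ Set.Ioo (0:ℝ) (1/4)) {k : Fin 3 → Fin 4}
    (hle : ∀ c, (k c : ℕ) ≤ 2) {c₀ : Fin 3} (h2 : k c₀ = 2) (huniq : ∀ c, k c = 2 → c = c₀) :
    volume (((anchoredBox (fun _ : Fin 3 => 1/2 + ε)) \ (anchoredBox (fun _ => 1/2)))
        ∩ cubeOf k) = ENNReal.ofReal (ε / 16) := by
  have hc₀ : ((k c₀ : ℕ) : ℝ) = 2 := by rw [h2]; norm_num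
  have hset : ((anchoredBox (fun _ : Fin 3 => 1/2 + ε)) \ (anchoredBox (fun _ => 1/2)))
        ∩ cubeOf k =
      Set.pi Set.univ (fun c => if c = c₀ then Set.Ico (1/2:ℝ) (1/2 + ε)
        else Set.Ico ((k c : ℝ) / 4) (((k c : ℝ) + 1) / 4)) := by
    ext x
    simp only [Set.mem_inter_iff, Set.mem_diff, Set.mem_pi, Set.mem_univ, true_implies]
    constructor
    · rintro ⟨⟨hbig, _⟩, hcube⟩ c
      by_cases hc : c = c₀
      · subst hc
        rw [if_pos rfl]
        refine ⟨?_, (hbig c).2⟩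
        have := (hcube c).1
        rw [hc₀] at this
        linarith
      · rw [if_neg hc]
        exact hcube c
    · intro hall
      have hcube : x ∈ cubeOf k := by
        intro c
        by_cases hc : c = c₀
        · subst hc
          have := hall c
          rw [if_pos rfl] at this
          rw [hc₀]
          constructor
          · linarith [this.1]
          · have := this.2
            have hε2 := hε.2
            linarith
        · have := hall c
          rw [if_neg hc] at this
          exact this
      refine ⟨⟨?_, ?_⟩, hcube⟩
      · intro c
        by_cases hc : c = c₀
        · subst hc
          have := hall c
          rw [if_pos rfl] at this
          exact ⟨by linarith [this.1], this.2⟩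
        · have hkc : (k c : ℕ) ≤ 1 := by
            have h2' : (k c : ℕ) ≠ 2 := fun hv => hc (huniq c (fin4_eq_two hv))
            have := hle c
            omega
          have hkc' : ((k c : ℕ) : ℝ) + 1 ≤ 2 := by
            have : ((k c : ℕ) : ℝ) ≤ 1 := by exact_mod_cast hkc
            linarith
          have hcc := hcube c
          have h0 : (0:ℝ) ≤ ((k c : ℕ) : ℝ) / 4 := by positivity
          refine ⟨le_trans h0 hcc.1, ?_⟩
          have := hcc.2
          have hε1 := hε.1
          linarith
      · intro hsmall
        have h1 := (hsmall c₀).2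
        have := hall c₀
        rw [if_pos rfl] at this
        linarith [this.1]
  rw [hset, volume_pi_pi]
  have hsplit : ∀ c : Fin 3, volume (if c = c₀ then Set.Ico (1/2:ℝ) (1/2 + ε)
      else Set.Ico ((k c : ℝ) / 4) (((k c : ℝ) + 1) / 4))
      = if c = c₀ then ENNReal.ofReal ε else ENNReal.ofReal (1/4) := by
    intro c
    split
    · rw [Real.volume_Ico]; congr 1; ring
    · rw [Real.volume_Ico]; congr 1; ring
  simp only [hsplit]
  rw [← Finset.prod_erase_mul _ _ (Finset.mem_univ c₀), if_pos rfl]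
  have hrest : ∀ c ∈ Finset.univ.erase c₀,
      (if c = c₀ then ENNReal.ofReal ε else ENNReal.ofReal (1/4)) = ENNReal.ofReal (1/4) :=
    fun c hc => if_neg (Finset.mem_erase.1 hc).1
  rw [Finset.prod_congr rfl hrest, Finset.prod_const, Finset.card_erase_of_mem (Finset.mem_univ _),
    Finset.card_univ, Fintype.card_fin, ← ENNReal.ofReal_pow (by norm_num : (0:ℝ) ≤ 1/4),
    ← ENNReal.ofReal_mul (by positivity)]
  congr 1
  norm_num
  ring

end Volumes

section Probabilistic

lemma ofReal_inv64 : ENNReal.ofReal (1 / 64) = (64 : ℝ≥0∞)⁻¹ := by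
  rw [ENNReal.ofReal_div_of_pos (by norm_num), ENNReal.ofReal_one]
  norm_num

def Jset : Finset (Fin (2 ^ 2)) := Finset.univ.filter (fun n => (n : ℕ) < 3)

lemma mem_Jset {n : Fin (2 ^ 2)} : n ∈ Jset ↔ (n : ℕ) < 3 := by
  simp [Jset]

lemma Jset_nonempty : Jset.Nonempty := ⟨0, mem_Jset.2 (by decide)⟩

lemma Jset_card : Jset.card = 3 := by decide

variable {Ω : Type*} [MeasurableSpace Ω] {μ : Measure Ω} [IsProbabilityMeasure μ]
  {Y : Fin (2 ^ 2) → Ω → Fin 3 → ℝ}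

lemma measure_cube_event (hY : IsAbstractScrambledNet μ 2 3 2 0 Y) (j : Fin (2 ^ 2))
    (k : Fin 3 → Fin 4) : μ {ω | Y j ω ∈ cubeOf k} = (64 : ℝ≥0∞)⁻¹ := by
  rw [hY.2.1 j (cubeOf k) (cubeOf_isBasicCube k)]
  norm_num

lemma nullMeasurable_cube_event (hY : IsAbstractScrambledNet μ 2 3 2 0 Y) (j : Fin (2 ^ 2))
    (k : Fin 3 → Fin 4) : NullMeasurableSet {ω | Y j ω ∈ cubeOf k} μ := by
  apply nullMeasurableSet_of_add_le_one
  have h1 : μ {ω | Y j ω ∈ cubeOf k} = (64 : ℝ≥0∞)⁻¹ := measure_cube_event hY j k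
  have hN : μ {ω | ¬ IsNet 2 3 2 0 (fun n => Y n ω)} = 0 := by
    have := hY.1
    rwa [MeasureTheory.ae_iff] at this
  have hsub : {ω | Y j ω ∈ cubeOf k}ᶜ ⊆
      {ω | ¬ IsNet 2 3 2 0 (fun n => Y n ω)} ∪
        ⋃ k' ∈ Finset.univ.erase k, {ω | Y j ω ∈ cubeOf k'} := by
    intro ω hω
    by_cases hnet : IsNet 2 3 2 0 (fun n => Y n ω)
    · right
      obtain ⟨k', hk'⟩ := mem_cubeOf_of_unit (fun c => (hnet.1 j) c)
      have hkk : k' ≠ k := fun he => hω (he ▸ hk')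
      simp only [Set.mem_iUnion, exists_prop]
      exact ⟨k', Finset.mem_erase.2 ⟨hkk, Finset.mem_univ _⟩, hk'⟩
    · left
      exact hnet
  have hb : μ ({ω | Y j ω ∈ cubeOf k}ᶜ) ≤ 63 * (64 : ℝ≥0∞)⁻¹ := by
    refine le_trans (measure_mono hsub) ?_
    refine le_trans (measure_union_le _ _) ?_
    rw [hN, zero_add]
    refine le_trans (measure_biUnion_finset_le _ _) ?_
    have hterms : ∀ k' ∈ Finset.univ.erase k, μ {ω | Y j ω ∈ cubeOf k'} = (64 : ℝ≥0∞)⁻¹ :=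
      fun k' _ => measure_cube_event hY j k'
    rw [Finset.sum_congr rfl hterms, Finset.sum_const,
      Finset.card_erase_of_mem (Finset.mem_univ _), Finset.card_univ]
    have hcard : Fintype.card (Fin 3 → Fin 4) = 64 := by simp
    rw [hcard]
    simp [nsmul_eq_mul]
  rw [h1]
  refine le_trans (add_le_add le_rfl hb) ?_
  have harith : (64 : ℝ≥0∞)⁻¹ + 63 * (64 : ℝ≥0∞)⁻¹ = 64 * (64 : ℝ≥0∞)⁻¹ := by ring
  rw [harith, ENNReal.mul_inv_cancel (by norm_num) (by norm_num)]

def EK (Y : Fin (2 ^ 2) → Ω → Fin 3 → ℝ) (K : Fin (2 ^ 2) → Fin 3 → Fin 4) : Set Ω :=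
  ⋂ j ∈ Jset, {ω | Y j ω ∈ cubeOf (K j)}

lemma mem_EK {ω : Ω} {K : Fin (2 ^ 2) → Fin 3 → Fin 4} :
    ω ∈ EK Y K ↔ ∀ j : Fin (2 ^ 2), (j : ℕ) < 3 → Y j ω ∈ cubeOf (K j) := by
  simp only [EK, Set.mem_iInter]
  exact ⟨fun h j hj => h j (mem_Jset.2 hj), fun h j hj => h j (mem_Jset.1 hj)⟩

lemma nullMeasurable_EK (hY : IsAbstractScrambledNet μ 2 3 2 0 Y)
    (K : Fin (2 ^ 2) → Fin 3 → Fin 4) : NullMeasurableSet (EK Y K) μ :=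
  NullMeasurableSet.iInter (fun j =>
    NullMeasurableSet.iInter (fun _ => nullMeasurable_cube_event hY j (K j)))

lemma EK_disjoint {K K' : Fin (2 ^ 2) → Fin 3 → Fin 4} (hK : Compat K) (hK' : Compat K')
    (hne : K ≠ K') : EK Y K ∩ EK Y K' = ∅ := by
  have hdiff : ∃ j : Fin (2 ^ 2), (j : ℕ) < 3 ∧ K j ≠ K' j := by
    by_contra h
    push_neg at h
    apply hne
    funext j
    rcases fin4_lt3_or_eq j with hj | rfl
    · exact h j hj
    · funext c
      rw [hK.1 c, hK'.1 c]
  obtain ⟨j, hj, hne'⟩ := hdiff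
  ext ω
  simp only [Set.mem_inter_iff, Set.mem_empty_iff_false, iff_false]
  rintro ⟨h1, h2⟩
  exact hne' (mem_cubeOf_unique (mem_EK.1 h1 j hj) (mem_EK.1 h2 j hj))

end Probabilistic

set_option maxRecDepth 40000 in
/-- For an abstract scrambled `(0,2,3)`-net in base `2`, `ε ∈ (0,1/4)` and
`D = [0,1/2+ε)^3 \ [0,1/2)^3`: `P(Y_1,Y_2,Y_3 ∈ D) = ε³` and
`P(Y_i ∈ D) = (1/2+ε)³ - (1/2)³` for `i ∈ {1,2,3}`. -/
theorem stmt16 {Ω : Type*} [MeasurableSpace Ω] (μ : Measure Ω) [IsProbabilityMeasure μ]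
    (Y : Fin (2 ^ 2) → Ω → Fin 3 → ℝ) (hY : IsAbstractScrambledNet μ 2 3 2 0 Y)
    (ε : ℝ) (hε : ε ∈ Set.Ioo (0 : ℝ) (1 / 4))
    (D : Set (Fin 3 → ℝ))
    (hD : D = anchoredBox (fun _ => 1 / 2 + ε) \ anchoredBox (fun _ => 1 / 2)) :
    μ {ω | ∀ n : Fin (2 ^ 2), (n : ℕ) < 3 → Y n ω ∈ D} = ENNReal.ofReal (ε ^ 3) ∧
    ∀ n : Fin (2 ^ 2), (n : ℕ) < 3 →
      μ {ω | Y n ω ∈ D} = ENNReal.ofReal ((1 / 2 + ε) ^ 3 - (1 / 2) ^ 3) := by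
  have hε0 := hε.1
  have hε4 := hε.2
  have hDm : MeasurableSet D := by
    rw [hD]
    exact (measurableSet_anchoredBox _).diff (measurableSet_anchoredBox _)
  have hN0 : μ {ω | ¬ IsNet 2 3 2 0 (fun n => Y n ω)} = 0 := by
    have := hY.1
    rwa [MeasureTheory.ae_iff] at this
  have h64 : ∀ (j : Fin (2 ^ 2)) (k : Fin 3 → Fin 4),
      μ {ω | Y j ω ∈ cubeOf k} = (64 : ℝ≥0∞)⁻¹ := fun j k => measure_cube_event hY j k
  have hDunit : ∀ x ∈ D, ∀ c, x c ∈ Set.Ico (0 : ℝ) 1 := by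
    intro x hx c
    rw [hD] at hx
    have h1 := hx.1 c
    exact ⟨h1.1, by have := h1.2; linarith⟩
  constructor
  · -- Joint probability
    set T := {ω | ∀ n : Fin (2 ^ 2), (n : ℕ) < 3 → Y n ω ∈ D} with hT
    set S : Finset (Fin (2 ^ 2) → Fin 3 → Fin 4) := Finset.univ.filter Compat with hS
    have hmemS : ∀ K, K ∈ S ↔ Compat K := by
      intro K
      rw [hS]
      simp only [Finset.mem_filter, Finset.mem_univ, true_and]
    have hEKdisj : ∀ K ∈ S, ∀ K' ∈ S, K ≠ K' → EK Y K ∩ EK Y K' = ∅ :=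
      fun K hK K' hK' hne => EK_disjoint ((hmemS K).1 hK) ((hmemS K').1 hK') hne
    have hEKnm : ∀ K ∈ S, NullMeasurableSet (EK Y K) μ := fun K _ => nullMeasurable_EK hY K
    -- upper bound
    have hup : μ T ≤ ∑ K ∈ S, μ (T ∩ EK Y K) := by
      have hsub : T ⊆ (⋃ K ∈ S, (T ∩ EK Y K)) ∪ {ω | ¬ IsNet 2 3 2 0 (fun n => Y n ω)} := by
        intro ω hω
        by_cases hnet : IsNet 2 3 2 0 (fun n => Y n ω)
        · left
          obtain ⟨K, hKc, hKm⟩ := exists_compat_of_mem_D hnet hε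
            (fun i hi => by have := hω i hi; rwa [hD] at this)
          simp only [Set.mem_iUnion, exists_prop]
          exact ⟨K, (hmemS K).2 hKc, hω, mem_EK.2 hKm⟩
        · right
          exact hnet
      calc μ T ≤ μ ((⋃ K ∈ S, (T ∩ EK Y K)) ∪ {ω | ¬ IsNet 2 3 2 0 (fun n => Y n ω)}) :=
            measure_mono hsub
      _ ≤ μ (⋃ K ∈ S, (T ∩ EK Y K)) + μ {ω | ¬ IsNet 2 3 2 0 (fun n => Y n ω)} :=
            measure_union_le _ _
      _ = μ (⋃ K ∈ S, (T ∩ EK Y K)) := by rw [hN0, add_zero]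
      _ ≤ ∑ K ∈ S, μ (T ∩ EK Y K) := measure_biUnion_finset_le S _
    -- lower bound
    have hlow : ∑ K ∈ S, μ (T ∩ EK Y K) ≤ μ T := by
      have hXsub : (T ∩ ⋃ K ∈ S, EK Y K) ⊆ ⋃ K ∈ S, EK Y K := Set.inter_subset_right
      have hpart := measure_eq_sum_partition μ S (fun K => EK Y K) hEKnm hEKdisj _ hXsub
      have htm : ∀ K ∈ S, (T ∩ ⋃ K' ∈ S, EK Y K') ∩ EK Y K = T ∩ EK Y K := by
        intro K hK
        ext ω
        constructor
        · rintro ⟨⟨h1, _⟩, h2⟩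
          exact ⟨h1, h2⟩
        · rintro ⟨h1, h2⟩
          refine ⟨⟨h1, ?_⟩, h2⟩
          simp only [Set.mem_iUnion, exists_prop]
          exact ⟨K, hK, h2⟩
      calc ∑ K ∈ S, μ (T ∩ EK Y K)
          = ∑ K ∈ S, μ ((T ∩ ⋃ K' ∈ S, EK Y K') ∩ EK Y K) :=
            Finset.sum_congr rfl (fun K hK => by rw [htm K hK])
      _ = μ (T ∩ ⋃ K ∈ S, EK Y K) := hpart.symm
      _ ≤ μ T := measure_mono Set.inter_subset_left
    -- value of each term
    have hterm2 : ∀ K ∈ S, μ (T ∩ EK Y K) = ENNReal.ofReal (4 * ε) ^ 3 * μ (EK Y K) := by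
      intro K hK
      have hKc := (hmemS K).1 hK
      by_cases h0 : μ (EK Y K) = 0
      · rw [h0, mul_zero]
        exact le_antisymm (le_trans (measure_mono Set.inter_subset_right) (le_of_eq h0))
          zero_le
      · have happ := hY.2.2 D hDm Jset Jset_nonempty (fun j => cubeOf (K j))
          (fun j _ => cubeOf_isBasicCube _) h0
        have hprod : (∏ j ∈ Jset, volume (D ∩ cubeOf (K j)) / volume (cubeOf (K j)))
            = ENNReal.ofReal (4 * ε) ^ 3 := by
          have hfac : ∀ j ∈ Jset,
              volume (D ∩ cubeOf (K j)) / volume (cubeOf (K j)) = ENNReal.ofReal (4 * ε) := by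
            intro j hj
            have hj3 := mem_Jset.1 hj
            obtain ⟨c₀, hc₀⟩ := hKc.2.2.2.1 j hj3
            have huniq : ∀ c, K j c = 2 → c = c₀ :=
              fun c hc => hKc.2.2.1 j hj3 c c₀ hc hc₀
            rw [hD, D_inter_cubeOf hε (hKc.2.1 j hj3) hc₀ huniq, volume_cubeOf,
              ← ENNReal.ofReal_div_of_pos (by norm_num)]
            congr 1
            ring
          rw [Finset.prod_congr rfl hfac, Finset.prod_const, Jset_card]
        rw [hprod] at happ
        have hTrw : T ∩ EK Y K = (⋂ j ∈ Jset, {ω | Y j ω ∈ D}) ∩ EK Y K := by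
          congr 1
          ext ω
          simp only [hT, Set.mem_setOf_eq, Set.mem_iInter]
          exact ⟨fun h j hj => h j (mem_Jset.1 hj), fun h j hj => h j (mem_Jset.2 hj)⟩
        rw [hTrw]
        exact cond_eval (nullMeasurable_EK hY K) h0 (measure_ne_top μ _) happ
    -- sum of the measures of the configurations
    have hsumEK : ∑ K ∈ S, μ (EK Y K) = (64 : ℝ≥0∞)⁻¹ := by
      have hpartU := measure_eq_sum_partition μ S (fun K => EK Y K) hEKnm hEKdisj
        (⋃ K ∈ S, EK Y K) (subset_refl _)
      have habs : ∀ K ∈ S, (⋃ K' ∈ S, EK Y K') ∩ EK Y K = EK Y K := by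
        intro K hK
        apply Set.inter_eq_self_of_subset_right
        intro ω hω
        simp only [Set.mem_iUnion, exists_prop]
        exact ⟨K, hK, hω⟩
      have habs' : ∀ K ∈ S, μ ((⋃ K' ∈ S, EK Y K') ∩ EK Y K) = μ (EK Y K) :=
        fun K hK => by rw [habs K hK]
      rw [Finset.sum_congr rfl habs'] at hpartU
      rw [← hpartU]
      have hGU : μ (⋃ K ∈ S, EK Y K) = μ {ω | Y 3 ω ∈ cubeOf (fun _ => 3)} := by
        apply le_antisymm
        · have hsub : (⋃ K ∈ S, EK Y K) ⊆ {ω | Y 3 ω ∈ cubeOf (fun _ => 3)} ∪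
              {ω | ¬ IsNet 2 3 2 0 (fun n => Y n ω)} := by
            intro ω hω
            by_cases hnet : IsNet 2 3 2 0 (fun n => Y n ω)
            · left
              simp only [Set.mem_iUnion, exists_prop] at hω
              obtain ⟨K, hK, hωK⟩ := hω
              exact mem_C333_of_compat hnet ((hmemS K).1 hK) (mem_EK.1 hωK)
            · right
              exact hnet
          calc μ (⋃ K ∈ S, EK Y K) ≤ μ ({ω | Y 3 ω ∈ cubeOf (fun _ => 3)} ∪
                {ω | ¬ IsNet 2 3 2 0 (fun n => Y n ω)}) := measure_mono hsub
          _ ≤ μ {ω | Y 3 ω ∈ cubeOf (fun _ => 3)} +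
                μ {ω | ¬ IsNet 2 3 2 0 (fun n => Y n ω)} := measure_union_le _ _
          _ = μ {ω | Y 3 ω ∈ cubeOf (fun _ => 3)} := by rw [hN0, add_zero]
        · have hsub : {ω | Y 3 ω ∈ cubeOf (fun _ => 3)} ⊆ (⋃ K ∈ S, EK Y K) ∪
              {ω | ¬ IsNet 2 3 2 0 (fun n => Y n ω)} := by
            intro ω hω
            by_cases hnet : IsNet 2 3 2 0 (fun n => Y n ω)
            · left
              obtain ⟨K, hKc, hKm⟩ := exists_compat_of_C333 hnet hω
              simp only [Set.mem_iUnion, exists_prop]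
              exact ⟨K, (hmemS K).2 hKc, mem_EK.2 hKm⟩
            · right
              exact hnet
          calc μ {ω | Y 3 ω ∈ cubeOf (fun _ => 3)} ≤ μ ((⋃ K ∈ S, EK Y K) ∪
                {ω | ¬ IsNet 2 3 2 0 (fun n => Y n ω)}) := measure_mono hsub
          _ ≤ μ (⋃ K ∈ S, EK Y K) + μ {ω | ¬ IsNet 2 3 2 0 (fun n => Y n ω)} :=
                measure_union_le _ _
          _ = μ (⋃ K ∈ S, EK Y K) := by rw [hN0, add_zero]
      rw [hGU, h64]
    -- combine
    have hfinal : μ T = ENNReal.ofReal (4 * ε) ^ 3 * (64 : ℝ≥0∞)⁻¹ := by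
      have h1 : μ T = ∑ K ∈ S, μ (T ∩ EK Y K) := le_antisymm hup hlow
      rw [h1, Finset.sum_congr rfl hterm2, ← Finset.mul_sum, hsumEK]
    rw [hfinal, ← ENNReal.ofReal_pow (by linarith : (0:ℝ) ≤ 4 * ε),
      (by ring : (4 * ε) ^ 3 = 64 * ε ^ 3),
      ENNReal.ofReal_mul (by norm_num : (0:ℝ) ≤ 64)]
    have h641 : ENNReal.ofReal (64 : ℝ) = (64 : ℝ≥0∞) := by norm_num
    rw [h641, mul_comm (64 : ℝ≥0∞) _, mul_assoc,
      ENNReal.mul_inv_cancel (by norm_num) (by norm_num), mul_one]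
  · -- Marginal probabilities
    intro n _
    set X := {ω | Y n ω ∈ D} with hX
    have hXsub : X ⊆ ⋃ k ∈ (Finset.univ : Finset (Fin 3 → Fin 4)), {ω | Y n ω ∈ cubeOf k} := by
      intro ω hω
      obtain ⟨k, hk⟩ := mem_cubeOf_of_unit (hDunit _ hω)
      simp only [Set.mem_iUnion, exists_prop]
      exact ⟨k, Finset.mem_univ k, hk⟩
    have hdisj : ∀ k ∈ (Finset.univ : Finset (Fin 3 → Fin 4)), ∀ k' ∈ Finset.univ, k ≠ k' →
        {ω | Y n ω ∈ cubeOf k} ∩ {ω | Y n ω ∈ cubeOf k'} = ∅ := by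
      intro k _ k' _ hkk'
      ext ω
      simp only [Set.mem_inter_iff, Set.mem_setOf_eq, Set.mem_empty_iff_false, iff_false]
      rintro ⟨h1, h2⟩
      exact hkk' (mem_cubeOf_unique h1 h2)
    have hpart := measure_eq_sum_partition μ Finset.univ (fun k => {ω | Y n ω ∈ cubeOf k})
      (fun k _ => nullMeasurable_cube_event hY n k) hdisj X hXsub
    have hterm : ∀ k ∈ (Finset.univ : Finset (Fin 3 → Fin 4)),
        μ (X ∩ {ω | Y n ω ∈ cubeOf k}) = volume (D ∩ cubeOf k) := by
      intro k _
      have hne : μ (⋂ j ∈ ({n} : Finset (Fin (2 ^ 2))), {ω | Y j ω ∈ cubeOf k}) ≠ 0 := by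
        rw [Finset.set_biInter_singleton, h64]
        norm_num
      have happ := hY.2.2 D hDm {n} (Finset.singleton_nonempty n) (fun _ => cubeOf k)
        (fun j _ => cubeOf_isBasicCube k) hne
      rw [Finset.set_biInter_singleton, Finset.set_biInter_singleton,
        Finset.prod_singleton] at happ
      have heval := cond_eval (nullMeasurable_cube_event hY n k)
        (by rw [h64]; norm_num) (measure_ne_top μ _) happ
      rw [h64 n k, volume_cubeOf, ofReal_inv64] at heval
      rw [heval, ENNReal.div_mul_cancel (by norm_num) (by norm_num)]
    rw [hpart, Finset.sum_congr rfl hterm]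
    have hsum : ∑ k : Fin 3 → Fin 4, volume (D ∩ cubeOf k) = volume D := by
      rw [← measure_biUnion_finset
        (by
          intro a _ b _ hab
          have := cubeOf_disjoint hab
          refine Set.disjoint_of_subset Set.inter_subset_right Set.inter_subset_right ?_
          rw [Set.disjoint_iff_inter_eq_empty, this])
        (fun k _ => hDm.inter (measurableSet_cubeOf k))]
      congr 1
      ext x
      simp only [Set.mem_iUnion, exists_prop, Set.mem_inter_iff]
      constructor
      · rintro ⟨k, _, hx, _⟩
        exact hx
      · intro hx
        obtain ⟨k, hk⟩ := mem_cubeOf_of_unit (hDunit _ hx)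
        exact ⟨k, Finset.mem_univ k, hx, hk⟩
    rw [hsum, hD, volume_D hε]

end LHSPaper
end
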